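/- The non-context-free language L_abc = { a^n b^n c^{2n} : n ≥ 0 } belongs to 4SDA; consequently 4SDA is not contained in CFL. -/

import Mathlib

/-!
Formalization infrastructure for depth-`k` storage automata (k-sda's),
following T. Yamakami, "Between SC and LOGDCFL: Families of Languages
Accepted by Logarithmic-Space Deterministic Auxiliary Depth-k Storage
Automata".
-/

namespace SDAP

/-- Head directions. -/
inductive Dir | left | stay | right
deriving DecidableEq

/-- Input-tape symbols: the two endmarkers `▷`, `◁` or a genuine symbol. -/
inductive InSym (α : Type) | lend | rend | sym (a : α)

/-- Move a head position on a semi-infinite tape (clamped at `0`). -/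
def moveNat (p : ℕ) : Dir → ℕ
  | Dir.left => p - 1
  | Dir.stay => p
  | Dir.right => p + 1

/-- Move the input head, clamped to the segment `[0, n+1]` holding `▷ x ◁`. -/
def moveIn (n p : ℕ) (d : Dir) : ℕ := min (moveNat p d) (n + 1)

/-- Symbol at position `i` of the input tape holding `▷ x ◁`. -/
def inAt {α : Type} (x : List α) (i : ℕ) : InSym α :=
  if i = 0 then InSym.lend
  else if h : i - 1 < x.length then InSym.sym (x.get ⟨i - 1, h⟩)
  else InSym.rend

/-! ### One-way deterministic depth-`k` storage automata (k-sda's) -/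

/-- Output of one transition of a k-sda. -/
structure SDAOut (Q G : ℕ) where
  st : Fin Q
  wr : Fin G
  dIn : Dir
  dSt : Dir

/-- A one-way deterministic depth-`k` storage automaton: a read-once input
tape and a depth-`k` storage tape with storage alphabet `Fin G` graded by
the depth function `dv`. -/
structure SDA (k : ℕ) (α : Type) where
  Q : ℕ
  G : ℕ
  dv : Fin G → ℕ
  box : Fin G      -- the initial blank `□`, depth 0
  blank : Fin G    -- the frozen blank `B`, depth k
  lend : Fin G     -- the left endmarker `▷` of the storage tape, depth k
  q0 : Fin Q
  qacc : Finset (Fin Q)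
  qrej : Finset (Fin Q)
  δ : Fin Q → InSym α → Fin G → SDAOut Q G

namespace SDA

variable {k : ℕ} {α : Type}

structure Cfg (M : SDA k α) where
  st : Fin M.Q
  ip : ℕ
  sp : ℕ
  tape : ℕ → Fin M.G

def init (M : SDA k α) : M.Cfg :=
  ⟨M.q0, 0, 0, fun i => if i = 0 then M.lend else M.box⟩

def Halted (M : SDA k α) (c : M.Cfg) : Prop := c.st ∈ M.qacc ∨ c.st ∈ M.qrej

def step (M : SDA k α) (x : List α) (c : M.Cfg) : M.Cfg :=
  if c.st ∈ M.qacc ∨ c.st ∈ M.qrej then c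
  else
    let t := M.δ c.st (inAt x c.ip) (c.tape c.sp)
    ⟨t.st, moveIn x.length c.ip t.dIn, moveNat c.sp t.dSt,
      Function.update c.tape c.sp t.wr⟩

def run (M : SDA k α) (x : List α) (t : ℕ) : M.Cfg := (M.step x)^[t] M.init

def Accepts (M : SDA k α) (x : List α) : Prop := ∃ t, (M.run x t).st ∈ M.qacc

def Rejects (M : SDA k α) (x : List α) : Prop := ∃ t, (M.run x t).st ∈ M.qrej

def Halts (M : SDA k α) (x : List α) : Prop := ∃ t, M.Halted (M.run x t)

def Recognizes (M : SDA k α) (L : Language α) : Prop :=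
  ∀ x, (x ∈ L ↔ M.Accepts x) ∧ (x ∉ L ↔ M.Rejects x)

def lang (M : SDA k α) : Language α := {x | M.Accepts x}

/-- `M` halts within polynomial time on every input. -/
def PolyTime (M : SDA k α) : Prop :=
  ∃ c : ℕ, ∀ x : List α, ∃ t ≤ c * x.length ^ c + c, M.Halted (M.run x t)

/-- Structural well-formedness: graded storage alphabet, read-once
(one-way) input head, and the depth-`k` requirement on the storage tape
(passing through a symbol of depth `e < k` raises its depth by `1`, and
by `2` at a turn, capped at `k`; depth-`k` symbols are frozen). Because the
depth alphabets are mutually disjoint, the direction from which the head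
arrived is encoded in the parity of the depth. -/
def WellFormed (M : SDA k α) : Prop :=
  (∀ s, M.dv s ≤ k) ∧ M.dv M.box = 0 ∧ M.dv M.blank = k ∧ M.dv M.lend = k ∧
  M.blank ≠ M.lend ∧
  ∀ q σ γ,
    ((M.δ q σ γ).dIn ≠ Dir.left) ∧
    ((M.δ q σ γ).wr = M.lend ↔ γ = M.lend) ∧
    (γ = M.lend → (M.δ q σ γ).dSt ≠ Dir.left) ∧
    (M.dv γ = k → (M.δ q σ γ).wr = γ) ∧
    ((M.δ q σ γ).dSt = Dir.stay → (M.δ q σ γ).wr = γ) ∧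
    (M.dv γ < k → (M.δ q σ γ).dSt = Dir.right →
      M.dv (M.δ q σ γ).wr = min (M.dv γ + if Even (M.dv γ) then 1 else 2) k) ∧
    (M.dv γ < k → (M.δ q σ γ).dSt = Dir.left →
      M.dv (M.δ q σ γ).wr = min (M.dv γ + if Even (M.dv γ) then 2 else 1) k) ∧
    (M.dv (M.δ q σ γ).wr = k → (M.δ q σ γ).wr = M.lend ∨ (M.δ q σ γ).wr = M.blank)

/-- Depth-susceptibility: while scanning a storage symbol of depth
`≥ k-1` the input head is stationary, and while scanning the frozen
blank the inner state does not change. -/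
def DepthSusceptible (M : SDA k α) : Prop :=
  ∀ q σ γ,
    (k - 1 ≤ M.dv γ → (M.δ q σ γ).dIn = Dir.stay) ∧
    (γ = M.blank → (M.δ q σ γ).st = q)

end SDA

/-- The family `kSDA` of languages recognized by depth-susceptible k-sda's. -/
def kSDA (k : ℕ) (α : Type) : Set (Language α) :=
  {L | ∃ M : SDA k α, M.WellFormed ∧ M.DepthSusceptible ∧ M.Recognizes L}

/-- The family `kSDA_imm` of languages recognized by polynomial-time
depth-immune k-sda's (no behavioral restriction at high-depth symbols). -/
def kSDAimm (k : ℕ) (α : Type) : Set (Language α) :=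
  {L | ∃ M : SDA k α, M.WellFormed ∧ M.PolyTime ∧ M.Recognizes L}

/-! ### One-way deterministic pushdown automata and DCFL -/

/-- A deterministic pushdown automaton (acceptance by final state with the
whole input consumed). `δε` gives ε-moves, `δ` gives reading moves; on a
transition the top stack symbol is replaced by a string. -/
structure DPDA (α : Type) where
  Q : ℕ
  G : ℕ
  q0 : Fin Q
  Z0 : Fin G
  qacc : Finset (Fin Q)
  δε : Fin Q → Fin G → Option (Fin Q × List (Fin G))
  δ : Fin Q → α → Fin G → Option (Fin Q × List (Fin G))

namespace DPDA

variable {α : Type}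

structure Cfg (P : DPDA α) where
  st : Fin P.Q
  input : List α
  stack : List (Fin P.G)

def init (P : DPDA α) (x : List α) : P.Cfg := ⟨P.q0, x, [P.Z0]⟩

def step (P : DPDA α) (c : P.Cfg) : P.Cfg :=
  match c.stack with
  | [] => c
  | Z :: ζ =>
    match P.δε c.st Z with
    | some (p, γ) => ⟨p, c.input, γ ++ ζ⟩
    | none =>
      match c.input with
      | [] => c
      | a :: w =>
        match P.δ c.st a Z with
        | some (p, γ) => ⟨p, w, γ ++ ζ⟩
        | none => c

/-- Determinism: an ε-move and a reading move are never both available. -/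
def Deterministic (P : DPDA α) : Prop :=
  ∀ q Z, (P.δε q Z).isSome → ∀ a, P.δ q a Z = none

def Accepts (P : DPDA α) (x : List α) : Prop :=
  ∃ t, (P.step^[t] (P.init x)).input = [] ∧ (P.step^[t] (P.init x)).st ∈ P.qacc

end DPDA

/-- The deterministic context-free languages. -/
def DCFL (α : Type) : Set (Language α) :=
  {L | ∃ P : DPDA α, P.Deterministic ∧ ∀ x, x ∈ L ↔ P.Accepts x}

/-! ### Offline deterministic Turing machines; SC^k and P -/

structure TMOut (Q W : ℕ) where
  st : Fin Q
  wr : Fin W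
  dIn : Dir
  dW : Dir

/-- A deterministic Turing machine with a two-way read-only input tape and
one semi-infinite rewritable work tape. -/
structure OffTM (α : Type) where
  Q : ℕ
  W : ℕ
  q0 : Fin Q
  blank : Fin W
  qacc : Finset (Fin Q)
  qrej : Finset (Fin Q)
  δ : Fin Q → InSym α → Fin W → TMOut Q W

namespace OffTM

variable {α : Type}

structure Cfg (M : OffTM α) where
  st : Fin M.Q
  ip : ℕ
  wp : ℕ
  w : ℕ → Fin M.W

def init (M : OffTM α) : M.Cfg := ⟨M.q0, 0, 0, fun _ => M.blank⟩

def Halted (M : OffTM α) (c : M.Cfg) : Prop := c.st ∈ M.qacc ∨ c.st ∈ M.qrej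

def step (M : OffTM α) (x : List α) (c : M.Cfg) : M.Cfg :=
  if c.st ∈ M.qacc ∨ c.st ∈ M.qrej then c
  else
    let t := M.δ c.st (inAt x c.ip) (c.w c.wp)
    ⟨t.st, moveIn x.length c.ip t.dIn, moveNat c.wp t.dW,
      Function.update c.w c.wp t.wr⟩

def run (M : OffTM α) (x : List α) (t : ℕ) : M.Cfg := (M.step x)^[t] M.init

def Accepts (M : OffTM α) (x : List α) : Prop := ∃ t, (M.run x t).st ∈ M.qacc

end OffTM

/-- Steve's class `SC^k`: languages decided by deterministic Turing machines
simultaneously in polynomial time and `O(log^k n)` space. -/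
def SCk (k : ℕ) (α : Type) : Set (Language α) :=
  {L | ∃ M : OffTM α, ∃ c : ℕ,
    (∀ x : List α, ∃ t ≤ c * x.length ^ c + c, M.Halted (M.run x t)) ∧
    (∀ x, x ∈ L ↔ M.Accepts x) ∧
    (∀ (x : List α) (t : ℕ), (M.run x t).wp + 1 ≤ c * (Nat.log 2 x.length) ^ k + c)}

/-- `SC = ⋃_{k ≥ 1} SC^k`. -/
def SC (α : Type) : Set (Language α) := {L | ∃ k, 1 ≤ k ∧ L ∈ SCk k α}

/-- Polynomial time. -/
def Pclass (α : Type) : Set (Language α) :=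
  {L | ∃ M : OffTM α, ∃ c : ℕ,
    (∀ x : List α, ∃ t ≤ c * x.length ^ c + c, M.Halted (M.run x t)) ∧
    (∀ x, x ∈ L ↔ M.Accepts x)}

/-! ### Function transducers; FL and logspace many-one reductions -/

structure TTMOut (Q W : ℕ) (β : Type) where
  st : Fin Q
  wr : Fin W
  dIn : Dir
  dW : Dir
  out : Option β

/-- A deterministic Turing machine computing a function: a two-way read-only
input tape, one work tape, and a write-once output tape. -/
structure TransTM (α β : Type) where
  Q : ℕ
  W : ℕ
  q0 : Fin Q
  blank : Fin W
  qhalt : Finset (Fin Q)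
  δ : Fin Q → InSym α → Fin W → TTMOut Q W β

namespace TransTM

variable {α β : Type}

structure Cfg (M : TransTM α β) where
  st : Fin M.Q
  ip : ℕ
  wp : ℕ
  w : ℕ → Fin M.W
  out : List β

def init (M : TransTM α β) : M.Cfg := ⟨M.q0, 0, 0, fun _ => M.blank, []⟩

def step (M : TransTM α β) (x : List α) (c : M.Cfg) : M.Cfg :=
  if c.st ∈ M.qhalt then c
  else
    let t := M.δ c.st (inAt x c.ip) (c.w c.wp)
    ⟨t.st, moveIn x.length c.ip t.dIn, moveNat c.wp t.dW,
      Function.update c.w c.wp t.wr, c.out ++ t.out.toList⟩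

def run (M : TransTM α β) (x : List α) (t : ℕ) : M.Cfg := (M.step x)^[t] M.init

def Computes (M : TransTM α β) (f : List α → List β) : Prop :=
  ∀ x, ∃ t, (M.run x t).st ∈ M.qhalt ∧ (M.run x t).out = f x

def PolyTime (M : TransTM α β) : Prop :=
  ∃ c : ℕ, ∀ x : List α, ∃ t ≤ c * x.length ^ c + c, (M.run x t).st ∈ M.qhalt

def LogSpace (M : TransTM α β) : Prop :=
  ∃ c : ℕ, ∀ (x : List α) (t : ℕ), (M.run x t).wp + 1 ≤ c * Nat.log 2 x.length + c

end TransTM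

/-- `FL`: functions computable in polynomial time and `O(log n)` space. -/
def InFL {α β : Type} (f : List α → List β) : Prop :=
  ∃ M : TransTM α β, M.Computes f ∧ M.PolyTime ∧ M.LogSpace

/-- Logarithmic-space many-one reducibility `≤^L_m`. -/
def LmRed {α β : Type} (L₁ : Language α) (L₂ : Language β) : Prop :=
  ∃ f : List α → List β, InFL f ∧ ∀ x, x ∈ L₁ ↔ f x ∈ L₂

/-- `LOGkSDA`: the closure of `kSDA` under `≤^L_m` (targets over a finite
alphabet, w.l.o.g. `Fin m`). -/
def LOGkSDA (k : ℕ) (α : Type) : Set (Language α) :=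
  {A | ∃ m : ℕ, ∃ B ∈ kSDA k (Fin m), LmRed A B}

/-- `LOGkSDA_imm`: the closure of `kSDA_imm` under `≤^L_m`. -/
def LOGkSDAimm (k : ℕ) (α : Type) : Set (Language α) :=
  {A | ∃ m : ℕ, ∃ B ∈ kSDAimm k (Fin m), LmRed A B}

/-- `LOGDCFL`: the closure of `DCFL` under `≤^L_m`. -/
def LOGDCFL (α : Type) : Set (Language α) :=
  {A | ∃ m : ℕ, ∃ B ∈ DCFL (Fin m), LmRed A B}

/-! ### Deterministic auxiliary depth-`k` storage automata -/

structure AuxOut (Q W G : ℕ) where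
  st : Fin Q
  wrW : Fin W
  wrG : Fin G
  dIn : Dir
  dW : Dir
  dSt : Dir

/-- A deterministic auxiliary depth-`k` storage automaton: a two-way
read-only input tape, a rewritable auxiliary work tape, and a depth-`k`
storage tape. -/
structure AuxSDA (k : ℕ) (α : Type) where
  Q : ℕ
  W : ℕ
  G : ℕ
  dv : Fin G → ℕ
  box : Fin G
  blank : Fin G
  lend : Fin G
  wblank : Fin W
  q0 : Fin Q
  qacc : Finset (Fin Q)
  qrej : Finset (Fin Q)
  δ : Fin Q → InSym α → Fin W → Fin G → AuxOut Q W G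

namespace AuxSDA

variable {k : ℕ} {α : Type}

structure Cfg (M : AuxSDA k α) where
  st : Fin M.Q
  ip : ℕ
  wp : ℕ
  sp : ℕ
  w : ℕ → Fin M.W
  tape : ℕ → Fin M.G

def init (M : AuxSDA k α) : M.Cfg :=
  ⟨M.q0, 0, 0, 0, fun _ => M.wblank, fun i => if i = 0 then M.lend else M.box⟩

def Halted (M : AuxSDA k α) (c : M.Cfg) : Prop := c.st ∈ M.qacc ∨ c.st ∈ M.qrej

def step (M : AuxSDA k α) (x : List α) (c : M.Cfg) : M.Cfg :=
  if c.st ∈ M.qacc ∨ c.st ∈ M.qrej then c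
  else
    let t := M.δ c.st (inAt x c.ip) (c.w c.wp) (c.tape c.sp)
    ⟨t.st, moveIn x.length c.ip t.dIn, moveNat c.wp t.dW, moveNat c.sp t.dSt,
      Function.update c.w c.wp t.wrW, Function.update c.tape c.sp t.wrG⟩

def run (M : AuxSDA k α) (x : List α) (t : ℕ) : M.Cfg := (M.step x)^[t] M.init

def Accepts (M : AuxSDA k α) (x : List α) : Prop := ∃ t, (M.run x t).st ∈ M.qacc

def Rejects (M : AuxSDA k α) (x : List α) : Prop := ∃ t, (M.run x t).st ∈ M.qrej

def Recognizes (M : AuxSDA k α) (L : Language α) : Prop :=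
  ∀ x, (x ∈ L ↔ M.Accepts x) ∧ (x ∉ L ↔ M.Rejects x)

def PolyTime (M : AuxSDA k α) : Prop :=
  ∃ c : ℕ, ∀ x : List α, ∃ t ≤ c * x.length ^ c + c, M.Halted (M.run x t)

/-- The auxiliary work tape uses only `O(log n)` cells. -/
def LogSpace (M : AuxSDA k α) : Prop :=
  ∃ c : ℕ, ∀ (x : List α) (t : ℕ), (M.run x t).wp + 1 ≤ c * Nat.log 2 x.length + c

/-- Structural well-formedness: the depth-`k` requirement on the storage
tape and the stationary requirement. -/
def WellFormed (M : AuxSDA k α) : Prop :=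
  (∀ s, M.dv s ≤ k) ∧ M.dv M.box = 0 ∧ M.dv M.blank = k ∧ M.dv M.lend = k ∧
  M.blank ≠ M.lend ∧
  ∀ q σ τ γ,
    ((M.δ q σ τ γ).wrG = M.lend ↔ γ = M.lend) ∧
    (γ = M.lend → (M.δ q σ τ γ).dSt ≠ Dir.left) ∧
    (M.dv γ = k → (M.δ q σ τ γ).wrG = γ) ∧
    ((M.δ q σ τ γ).dSt = Dir.stay → (M.δ q σ τ γ).wrG = γ) ∧
    ((M.δ q σ τ γ).dW = Dir.stay → (M.δ q σ τ γ).wrW = τ) ∧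
    (M.dv γ < k → (M.δ q σ τ γ).dSt = Dir.right →
      M.dv (M.δ q σ τ γ).wrG = min (M.dv γ + if Even (M.dv γ) then 1 else 2) k) ∧
    (M.dv γ < k → (M.δ q σ τ γ).dSt = Dir.left →
      M.dv (M.δ q σ τ γ).wrG = min (M.dv γ + if Even (M.dv γ) then 2 else 1) k) ∧
    (M.dv (M.δ q σ τ γ).wrG = k →
      (M.δ q σ τ γ).wrG = M.lend ∨ (M.δ q σ τ γ).wrG = M.blank)

/-- Depth-susceptibility for auxiliary machines: while scanning a storage
symbol of depth `≥ k-1`, both the input head and the auxiliary head are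
stationary; while scanning the frozen blank, the inner state is unchanged. -/
def DepthSusceptible (M : AuxSDA k α) : Prop :=
  ∀ q σ τ γ,
    (k - 1 ≤ M.dv γ → (M.δ q σ τ γ).dIn = Dir.stay ∧ (M.δ q σ τ γ).dW = Dir.stay) ∧
    (γ = M.blank → (M.δ q σ τ γ).st = q)

end AuxSDA

/-! ### Two-way multi-head deterministic depth-`k` storage automata -/

structure MOut (Q G ℓ : ℕ) where
  st : Fin Q
  wr : Fin G
  dIn : Fin ℓ → Dir
  dSt : Dir

/-- A two-way `ℓ`-head deterministic depth-`k` storage automaton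
(`k`-sda₂(ℓ)): `ℓ` two-way read-only input heads and one depth-`k`
storage tape. -/
structure MSDA (k ℓ : ℕ) (α : Type) where
  Q : ℕ
  G : ℕ
  dv : Fin G → ℕ
  box : Fin G
  blank : Fin G
  lend : Fin G
  q0 : Fin Q
  qacc : Finset (Fin Q)
  qrej : Finset (Fin Q)
  δ : Fin Q → (Fin ℓ → InSym α) → Fin G → MOut Q G ℓ

namespace MSDA

variable {k ℓ : ℕ} {α : Type}

structure Cfg (M : MSDA k ℓ α) where
  st : Fin M.Q
  ips : Fin ℓ → ℕ
  sp : ℕ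
  tape : ℕ → Fin M.G

def init (M : MSDA k ℓ α) : M.Cfg :=
  ⟨M.q0, fun _ => 0, 0, fun i => if i = 0 then M.lend else M.box⟩

def Halted (M : MSDA k ℓ α) (c : M.Cfg) : Prop := c.st ∈ M.qacc ∨ c.st ∈ M.qrej

def step (M : MSDA k ℓ α) (x : List α) (c : M.Cfg) : M.Cfg :=
  if c.st ∈ M.qacc ∨ c.st ∈ M.qrej then c
  else
    let t := M.δ c.st (fun i => inAt x (c.ips i)) (c.tape c.sp)
    ⟨t.st, fun i => moveIn x.length (c.ips i) (t.dIn i), moveNat c.sp t.dSt,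
      Function.update c.tape c.sp t.wr⟩

def run (M : MSDA k ℓ α) (x : List α) (t : ℕ) : M.Cfg := (M.step x)^[t] M.init

def Accepts (M : MSDA k ℓ α) (x : List α) : Prop := ∃ t, (M.run x t).st ∈ M.qacc

def Rejects (M : MSDA k ℓ α) (x : List α) : Prop := ∃ t, (M.run x t).st ∈ M.qrej

def Halts (M : MSDA k ℓ α) (x : List α) : Prop := ∃ t, M.Halted (M.run x t)

def Recognizes (M : MSDA k ℓ α) (L : Language α) : Prop :=
  ∀ x, (x ∈ L ↔ M.Accepts x) ∧ (x ∉ L ↔ M.Rejects x)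

def PolyTime (M : MSDA k ℓ α) : Prop :=
  ∃ c : ℕ, ∀ x : List α, ∃ t ≤ c * x.length ^ c + c, M.Halted (M.run x t)

def WellFormed (M : MSDA k ℓ α) : Prop :=
  (∀ s, M.dv s ≤ k) ∧ M.dv M.box = 0 ∧ M.dv M.blank = k ∧ M.dv M.lend = k ∧
  M.blank ≠ M.lend ∧
  ∀ q σ γ,
    ((M.δ q σ γ).wr = M.lend ↔ γ = M.lend) ∧
    (γ = M.lend → (M.δ q σ γ).dSt ≠ Dir.left) ∧
    (M.dv γ = k → (M.δ q σ γ).wr = γ) ∧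
    ((M.δ q σ γ).dSt = Dir.stay → (M.δ q σ γ).wr = γ) ∧
    (M.dv γ < k → (M.δ q σ γ).dSt = Dir.right →
      M.dv (M.δ q σ γ).wr = min (M.dv γ + if Even (M.dv γ) then 1 else 2) k) ∧
    (M.dv γ < k → (M.δ q σ γ).dSt = Dir.left →
      M.dv (M.δ q σ γ).wr = min (M.dv γ + if Even (M.dv γ) then 2 else 1) k) ∧
    (M.dv (M.δ q σ γ).wr = k → (M.δ q σ γ).wr = M.lend ∨ (M.δ q σ γ).wr = M.blank)

/-- Depth-susceptibility: all input heads are stationary while the storage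
head scans a symbol of depth `≥ k-1`, and the state is unchanged while
scanning the frozen blank. -/
def DepthSusceptible (M : MSDA k ℓ α) : Prop :=
  ∀ q σ γ,
    (k - 1 ≤ M.dv γ → ∀ i, (M.δ q σ γ).dIn i = Dir.stay) ∧
    (γ = M.blank → (M.δ q σ γ).st = q)

/-- Head `h` is a counter head: the transition function ignores the symbol
it scans, and the storage-tape head stays still whenever head `h` moves. -/
def CounterHead (M : MSDA k ℓ α) (h : Fin ℓ) : Prop :=
  (∀ q σ σ' γ, (∀ i, i ≠ h → σ i = σ' i) → M.δ q σ γ = M.δ q σ' γ) ∧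
  (∀ q σ γ, (M.δ q σ γ).dIn h ≠ Dir.stay → (M.δ q σ γ).dSt = Dir.stay)

/-- Head `h` never moves to the left. -/
def OneWayHead (M : MSDA k ℓ α) (h : Fin ℓ) : Prop :=
  ∀ q σ γ, (M.δ q σ γ).dIn h ≠ Dir.left

end MSDA

/-- `kSDA₂(ℓ)`: languages recognized in polynomial time by depth-immune
two-way `ℓ`-head deterministic depth-`k` storage automata. -/
def kSDA2 (k ℓ : ℕ) (α : Type) : Set (Language α) :=
  {L | ∃ M : MSDA k ℓ α, M.WellFormed ∧ M.PolyTime ∧ M.Recognizes L}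

/-! ### Hibbard's deterministic k-limited automata -/

structure LDAOut (Q G : ℕ) where
  st : Fin Q
  wr : Fin G
  d : Dir

/-- A deterministic `k`-limited automaton: a single-tape two-way machine
whose tape initially holds `▷ x ◁`; each cell may be rewritten only during
its first `k` visits (a turn counts twice), tracked by the graded tape
alphabet. -/
structure LDA (k : ℕ) (α : Type) where
  Q : ℕ
  G : ℕ
  dv : Fin G → ℕ
  embed : α → Fin G     -- input symbols, of depth 0
  lend : Fin G          -- `▷`, frozen
  rend : Fin G          -- `◁`, frozen
  q0 : Fin Q
  qacc : Finset (Fin Q)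
  qrej : Finset (Fin Q)
  δ : Fin Q → Fin G → LDAOut Q G

namespace LDA

variable {k : ℕ} {α : Type}

structure Cfg (M : LDA k α) where
  st : Fin M.Q
  p : ℕ
  tape : ℕ → Fin M.G

def init (M : LDA k α) (x : List α) : M.Cfg :=
  ⟨M.q0, 0, fun i =>
    if i = 0 then M.lend
    else if h : i - 1 < x.length then M.embed (x.get ⟨i - 1, h⟩)
    else M.rend⟩

def Halted (M : LDA k α) (c : M.Cfg) : Prop := c.st ∈ M.qacc ∨ c.st ∈ M.qrej

def step (M : LDA k α) (c : M.Cfg) : M.Cfg :=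
  if c.st ∈ M.qacc ∨ c.st ∈ M.qrej then c
  else
    let t := M.δ c.st (c.tape c.p)
    ⟨t.st, moveNat c.p t.d, Function.update c.tape c.p t.wr⟩

def run (M : LDA k α) (x : List α) (t : ℕ) : M.Cfg := M.step^[t] (M.init x)

def Accepts (M : LDA k α) (x : List α) : Prop := ∃ t, (M.run x t).st ∈ M.qacc

def Rejects (M : LDA k α) (x : List α) : Prop := ∃ t, (M.run x t).st ∈ M.qrej

def Recognizes (M : LDA k α) (L : Language α) : Prop :=
  ∀ x, (x ∈ L ↔ M.Accepts x) ∧ (x ∉ L ↔ M.Rejects x)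

def WellFormed (M : LDA k α) : Prop :=
  (∀ s, M.dv s ≤ k) ∧ (∀ a, M.dv (M.embed a) = 0) ∧
  M.dv M.lend = k ∧ M.dv M.rend = k ∧ M.lend ≠ M.rend ∧
  ∀ q γ,
    ((M.δ q γ).wr = M.lend ↔ γ = M.lend) ∧
    ((M.δ q γ).wr = M.rend ↔ γ = M.rend) ∧
    (γ = M.lend → (M.δ q γ).d ≠ Dir.left) ∧
    (γ = M.rend → (M.δ q γ).d ≠ Dir.right) ∧
    (M.dv γ = k → (M.δ q γ).wr = γ) ∧
    ((M.δ q γ).d = Dir.stay → (M.δ q γ).wr = γ) ∧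
    (M.dv γ < k → (M.δ q γ).d = Dir.right →
      M.dv (M.δ q γ).wr = min (M.dv γ + if Even (M.dv γ) then 1 else 2) k) ∧
    (M.dv γ < k → (M.δ q γ).d = Dir.left →
      M.dv (M.δ q γ).wr = min (M.dv γ + if Even (M.dv γ) then 2 else 1) k)

end LDA

/-! ### Encodings of k-sda's and the membership problem MEMB_k -/

/-- An encoding scheme: a map sending every depth-susceptible k-sda over an
alphabet `Fin a` together with an input to a binary string. -/
def EncInjective {k : ℕ}
    (enc : (a : ℕ) → SDA k (Fin a) → List (Fin a) → List Bool) : Prop :=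
  Function.Injective
    (fun p : (a : ℕ) × (SDA k (Fin a) × List (Fin a)) => enc p.1 p.2.1 p.2.2)

/-- The membership problem `MEMB_k` relative to an encoding scheme. -/
def MEMB (k : ℕ)
    (enc : (a : ℕ) → SDA k (Fin a) → List (Fin a) → List Bool) : Language Bool :=
  {y | ∃ (a : ℕ) (M : SDA k (Fin a)) (x : List (Fin a)),
    M.WellFormed ∧ M.DepthSusceptible ∧ y = enc a M x ∧ M.Accepts x}

end SDAP

open SDAP

/-- `L_abc = { a^n b^n c^{2n} | n ≥ 0 }` over the alphabet `{a,b,c} = Fin 3`. -/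
def Labc : Language (Fin 3) :=
  {w | ∃ n : ℕ, w = List.replicate n 0 ++ List.replicate n 1 ++ List.replicate (2 * n) 2}

section SDApart
open SDAP

instance {α : Type} [DecidableEq α] : DecidableEq (InSym α) := fun a b =>
  match a, b with
  | .lend, .lend => isTrue rfl
  | .rend, .rend => isTrue rfl
  | .sym x, .sym y =>
    if h : x = y then isTrue (by rw [h]) else isFalse (fun hc => by cases hc; exact h rfl)
  | .lend, .rend => isFalse (by intro h; cases h)
  | .lend, .sym _ => isFalse (by intro h; cases h)
  | .rend, .lend => isFalse (by intro h; cases h)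
  | .rend, .sym _ => isFalse (by intro h; cases h)
  | .sym _, .lend => isFalse (by intro h; cases h)
  | .sym _, .rend => isFalse (by intro h; cases h)

instance : Fintype (InSym (Fin 3)) where
  elems := {InSym.lend, InSym.rend, InSym.sym 0, InSym.sym 1, InSym.sym 2}
  complete := by
    intro x
    cases x with
    | lend => decide
    | rend => decide
    | sym a => fin_cases a <;> decide

deriving instance DecidableEq for SDAP.SDAOut

namespace LabcSDA

def enc : InSym (Fin 3) → ℕ
  | .lend => 0
  | .rend => 1
  | .sym a => 2 + a.val

def tr : Fin 7 → InSym (Fin 3) → Fin 7 → SDAOut 7 7 := fun q σ γ =>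
  match q.val, enc σ, γ.val with
  | 0, _, 6 => ⟨0, 6, .stay, .right⟩
  | 0, 0, 0 => ⟨0, 0, .right, .stay⟩
  | 0, 2, 0 => ⟨1, 1, .right, .right⟩
  | 0, 3, 0 => ⟨2, 3, .stay, .left⟩
  | 0, 4, 0 => ⟨6, 0, .stay, .stay⟩
  | 0, 1, 0 => ⟨5, 0, .stay, .stay⟩
  | 1, 2, 0 => ⟨1, 1, .right, .right⟩
  | 1, 3, 0 => ⟨2, 3, .stay, .left⟩
  | 1, 4, 0 => ⟨6, 0, .stay, .stay⟩
  | 1, 1, 0 => ⟨6, 0, .stay, .stay⟩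
  | 2, 3, 1 => ⟨2, 2, .right, .left⟩
  | 2, _, 1 => ⟨6, 1, .stay, .stay⟩
  | 2, 4, 6 => ⟨3, 6, .stay, .right⟩
  | 2, _, 6 => ⟨6, 6, .stay, .stay⟩
  | 3, 4, 2 => ⟨4, 2, .right, .stay⟩
  | 3, _, 2 => ⟨6, 2, .stay, .stay⟩
  | 3, 1, 3 => ⟨5, 3, .stay, .stay⟩
  | 3, _, 3 => ⟨6, 3, .stay, .stay⟩
  | 4, 4, 2 => ⟨3, 4, .right, .right⟩
  | 4, _, 2 => ⟨6, 2, .stay, .stay⟩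
  | _, _, _ => if γ = (5 : Fin 7) then ⟨q, γ, .stay, .stay⟩ else ⟨6, γ, .stay, .stay⟩

def M : SDA 4 (Fin 3) where
  Q := 7
  G := 7
  dv := ![0,1,2,2,3,4,4]
  box := 0
  blank := 5
  lend := 6
  q0 := 0
  qacc := {5}
  qrej := {6}
  δ := tr

lemma M_wf : M.WellFormed := by
  refine ⟨by decide, by decide, by decide, by decide, by decide, ?_⟩
  decide

lemma M_ds : M.DepthSusceptible := by
  unfold SDA.DepthSusceptible; decide

end LabcSDA
end SDApart
namespace LabcSDA

/-! ### Reachability infrastructure -/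

abbrev cfg (q : Fin 7) (ip sp : ℕ) (T : ℕ → Fin 7) : M.Cfg := ⟨q, ip, sp, T⟩

def Rch (x : List (Fin 3)) (c c' : M.Cfg) : Prop := ∃ t, (M.step x)^[t] c = c'

lemma Rch.refl (x : List (Fin 3)) (c : M.Cfg) : Rch x c c := ⟨0, rfl⟩

lemma Rch.trans {x : List (Fin 3)} {a b c : M.Cfg} (h1 : Rch x a b) (h2 : Rch x b c) :
    Rch x a c := by
  obtain ⟨t1, h1⟩ := h1; obtain ⟨t2, h2⟩ := h2
  exact ⟨t2 + t1, by rw [Function.iterate_add_apply, h1, h2]⟩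

lemma Rch.single {x : List (Fin 3)} {a b : M.Cfg} (h : M.step x a = b) : Rch x a b :=
  ⟨1, by simpa using h⟩

lemma accepts_of_rch {x : List (Fin 3)} {c : M.Cfg} (h : Rch x M.init c) (hc : c.st = (5 : Fin 7)) :
    M.Accepts x := by
  obtain ⟨t, ht⟩ := h
  refine ⟨t, ?_⟩
  show ((M.step x)^[t] M.init).st ∈ M.qacc
  rw [ht]
  show _ ∈ ({5} : Finset (Fin 7))
  rw [hc]; decide

lemma rejects_of_rch {x : List (Fin 3)} {c : M.Cfg} (h : Rch x M.init c) (hc : c.st = (6 : Fin 7)) :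
    M.Rejects x := by
  obtain ⟨t, ht⟩ := h
  refine ⟨t, ?_⟩
  show ((M.step x)^[t] M.init).st ∈ M.qrej
  rw [ht]
  show _ ∈ ({6} : Finset (Fin 7))
  rw [hc]; decide

lemma step_eq {x : List (Fin 3)} (q : Fin 7) (ip sp : ℕ) (T : ℕ → Fin 7)
    {σv : InSym (Fin 3)} {γv : Fin 7} {out : SDAOut 7 7}
    (h5 : q ≠ 5) (h6 : q ≠ 6) (hσ : inAt x ip = σv) (hγ : T sp = γv)
    (ht : tr q σv γv = out) :
    M.step x ⟨q, ip, sp, T⟩ =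
      ⟨out.st, moveIn x.length ip out.dIn, moveNat sp out.dSt,
        Function.update T sp out.wr⟩ := by
  unfold SDA.step
  rw [if_neg]
  · dsimp only
    rw [show M.δ = tr from rfl, hσ, hγ, ht]
  · rintro (h | h)
    · exact h5 (Finset.mem_singleton.mp h)
    · exact h6 (Finset.mem_singleton.mp h)

lemma moveIn_stay {len ip : ℕ} (h : ip ≤ len + 1) : moveIn len ip Dir.stay = ip := by
  simp only [moveIn, moveNat]; omega

lemma moveIn_right {len ip : ℕ} (h : ip ≤ len) : moveIn len ip Dir.right = ip + 1 := by
  simp only [moveIn, moveNat]; omega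

/-! ### The canonical input and its symbols -/

def X (n m l : ℕ) (w : List (Fin 3)) : List (Fin 3) :=
  List.replicate n 0 ++ (List.replicate m 1 ++ (List.replicate l 2 ++ w))

lemma len_X (n m l : ℕ) (w : List (Fin 3)) : (X n m l w).length = n + (m + (l + w.length)) := by
  simp [X]

lemma inAt_pos (x : List (Fin 3)) (i : ℕ) (hi : i ≠ 0) :
    inAt x i = (x[i-1]?.elim InSym.rend InSym.sym) := by
  unfold inAt
  rw [if_neg hi]
  by_cases h : i - 1 < x.length
  · rw [dif_pos h, List.getElem?_eq_getElem h]
    rfl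
  · rw [dif_neg h, List.getElem?_eq_none (by omega)]
    rfl

lemma inAt_rend (x : List (Fin 3)) (i : ℕ) (h : x.length < i) : inAt x i = InSym.rend := by
  rw [inAt_pos x i (by omega), List.getElem?_eq_none (by omega)]
  rfl

section Regions

variable (n m l : ℕ) (w : List (Fin 3))

lemma getX0 {j : ℕ} (h : j < n) : (X n m l w)[j]? = some 0 := by
  rw [X, List.getElem?_append_left (by simpa using h), List.getElem?_replicate, if_pos h]

lemma getX1 {j : ℕ} (h1 : n ≤ j) (h2 : j < n + m) : (X n m l w)[j]? = some 1 := by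
  rw [X, List.getElem?_append_right (by simpa using h1)]
  rw [List.getElem?_append_left (by simp; omega), List.getElem?_replicate,
    if_pos (by simp; omega)]

lemma getX2 {j : ℕ} (h1 : n + m ≤ j) (h2 : j < n + m + l) : (X n m l w)[j]? = some 2 := by
  rw [X, List.getElem?_append_right (by simp; omega),
    List.getElem?_append_right (by simp; omega)]
  rw [List.getElem?_append_left (by simp; omega), List.getElem?_replicate,
    if_pos (by simp; omega)]

lemma getXw {j : ℕ} (h1 : n + m + l ≤ j) : (X n m l w)[j]? = w[j - (n + m + l)]? := by
  rw [X, List.getElem?_append_right (by simp; omega),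
    List.getElem?_append_right (by simp; omega),
    List.getElem?_append_right (by simp; omega)]
  congr 1
  simp
  omega

lemma inAt_a {i : ℕ} (h1 : 1 ≤ i) (h2 : i ≤ n) : inAt (X n m l w) i = InSym.sym 0 := by
  rw [inAt_pos _ _ (by omega), getX0 n m l w (by omega)]; rfl

lemma inAt_b {i : ℕ} (h1 : n + 1 ≤ i) (h2 : i ≤ n + m) : inAt (X n m l w) i = InSym.sym 1 := by
  rw [inAt_pos _ _ (by omega), getX1 n m l w (by omega) (by omega)]; rfl

lemma inAt_c {i : ℕ} (h1 : n + m + 1 ≤ i) (h2 : i ≤ n + m + l) :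
    inAt (X n m l w) i = InSym.sym 2 := by
  rw [inAt_pos _ _ (by omega), getX2 n m l w (by omega) (by omega)]; rfl

lemma inAt_hd {d : Fin 3} {w' : List (Fin 3)} (hw : w = d :: w') :
    inAt (X n m l w) (n + m + l + 1) = InSym.sym d := by
  rw [inAt_pos _ _ (by omega), getXw n m l w (by omega)]
  simp [hw]

lemma inAt_nil (hw : w = []) {i : ℕ} (h : n + m + l < i) : inAt (X n m l w) i = InSym.rend := by
  apply inAt_rend
  rw [len_X, hw]
  simp only [List.length_nil]
  omega

end Regions

/-! ### Tape stages -/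

def T0 : ℕ → Fin 7 := fun i => if i = 0 then 6 else 0
def TA (j : ℕ) : ℕ → Fin 7 := fun i => if i = 0 then 6 else if i ≤ j then 1 else 0
def TB (p n : ℕ) : ℕ → Fin 7 := fun i =>
  if i = 0 then 6 else if i ≤ p then 1 else if i ≤ n then 2 else if i = n + 1 then 3 else 0
def TC (p n : ℕ) : ℕ → Fin 7 := fun i =>
  if i = 0 then 6 else if i < p then 4 else if i ≤ n then 2 else if i = n + 1 then 3 else 0

lemma upd_self (T : ℕ → Fin 7) (a : ℕ) (v : Fin 7) (h : T a = v) :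
    Function.update T a v = T := by rw [← h, Function.update_eq_self]

lemma TA0 : T0 = TA 0 := by
  funext i; simp only [T0, TA]; split_ifs <;> first | rfl | (exfalso; first | exact ‹False› | omega)

lemma vTA (j i : ℕ) (h1 : i ≠ 0) (h2 : j < i) : TA j i = 0 := by
  simp only [TA]; split_ifs <;> first | rfl | (exfalso; first | exact ‹False› | omega)

lemma uTA (j : ℕ) : Function.update (TA j) (j + 1) 1 = TA (j + 1) := by
  funext i
  rcases eq_or_ne i (j + 1) with h | h
  · subst h
    rw [Function.update_self]
    simp only [TA]; rw [if_neg (by omega), if_pos (by omega)]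
  · rw [Function.update_of_ne h]
    simp only [TA]; split_ifs <;> first | rfl | (exfalso; first | exact ‹False› | omega)

lemma uTB (n : ℕ) : Function.update (TA n) (n + 1) 3 = TB n n := by
  funext i
  rcases eq_or_ne i (n + 1) with h | h
  · subst h
    rw [Function.update_self]
    simp only [TB]; split_ifs <;> first | rfl | (exfalso; first | exact ‹False› | omega)
  · rw [Function.update_of_ne h]
    simp only [TA, TB]; split_ifs <;> first | rfl | (exfalso; first | exact ‹False› | omega)

lemma vTB1 (p n : ℕ) (h : 1 ≤ p) : TB p n p = 1 := by
  simp only [TB]; split_ifs <;> first | rfl | (exfalso; first | exact ‹False› | omega)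

lemma vTB0 (n : ℕ) : TB 0 n 0 = 6 := rfl

lemma uTBstep (j n : ℕ) (hn : j + 1 ≤ n) :
    Function.update (TB (j + 1) n) (j + 1) 2 = TB j n := by
  funext i
  rcases eq_or_ne i (j + 1) with h | h
  · subst h
    rw [Function.update_self]
    simp only [TB]; split_ifs <;> first | rfl | (exfalso; first | exact ‹False› | omega)
  · rw [Function.update_of_ne h]
    simp only [TB]; split_ifs <;> first | rfl | (exfalso; first | exact ‹False› | omega)

lemma TB0TC (n : ℕ) : TB 0 n = TC 1 n := by
  funext i; simp only [TB, TC]; split_ifs <;> first | rfl | (exfalso; first | exact ‹False› | omega)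

lemma vTC2 (p n : ℕ) (h1 : 1 ≤ p) (h2 : p ≤ n) : TC p n p = 2 := by
  simp only [TC]; split_ifs <;> first | rfl | (exfalso; first | exact ‹False› | omega)

lemma vTCX (n : ℕ) : TC (n + 1) n (n + 1) = 3 := by
  simp only [TC]; split_ifs <;> first | rfl | (exfalso; first | exact ‹False› | omega)

lemma uTCstep (j n : ℕ) : Function.update (TC (j + 1) n) (j + 1) 4 = TC (j + 2) n := by
  funext i
  rcases eq_or_ne i (j + 1) with h | h
  · subst h
    rw [Function.update_self]
    simp only [TC]; split_ifs <;> first | rfl | (exfalso; first | exact ‹False› | omega)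
  · rw [Function.update_of_ne h]
    simp only [TC]; split_ifs <;> first | rfl | (exfalso; first | exact ‹False› | omega)

end LabcSDA
namespace LabcSDA

/-! ### tr helper facts -/

lemma tr2ne1 : ∀ σ : InSym (Fin 3), σ ≠ .sym 1 → tr 2 σ 1 = (⟨6, 1, .stay, .stay⟩ : SDAOut 7 7) := by decide
lemma tr2ne2 : ∀ σ : InSym (Fin 3), σ ≠ .sym 2 → tr 2 σ 6 = (⟨6, 6, .stay, .stay⟩ : SDAOut 7 7) := by decide
lemma tr3ne2 : ∀ σ : InSym (Fin 3), σ ≠ .sym 2 → tr 3 σ 2 = (⟨6, 2, .stay, .stay⟩ : SDAOut 7 7) := by decide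
lemma tr4ne2 : ∀ σ : InSym (Fin 3), σ ≠ .sym 2 → tr 4 σ 2 = (⟨6, 2, .stay, .stay⟩ : SDAOut 7 7) := by decide
lemma tr33 : ∀ d : Fin 3, tr 3 (.sym d) 3 = (⟨6, 3, .stay, .stay⟩ : SDAOut 7 7) := by decide

/-! ### terminal-step helpers -/

lemma rej_of {x : List (Fin 3)} {q : Fin 7} {ip sp : ℕ} {T : ℕ → Fin 7}
    {σv : InSym (Fin 3)} {γv : Fin 7}
    (h : Rch x M.init (cfg (q) (ip) (sp) (T))) (h5 : q ≠ 5) (h6 : q ≠ 6)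
    (hσ : inAt x ip = σv) (hγ : T sp = γv) (hst : (tr q σv γv).st = 6) : M.Rejects x := by
  apply rejects_of_rch (h.trans (Rch.single rfl))
  rw [step_eq q ip sp T h5 h6 hσ hγ rfl]
  exact hst

lemma acc_of {x : List (Fin 3)} {q : Fin 7} {ip sp : ℕ} {T : ℕ → Fin 7}
    {σv : InSym (Fin 3)} {γv : Fin 7}
    (h : Rch x M.init (cfg (q) (ip) (sp) (T))) (h5 : q ≠ 5) (h6 : q ≠ 6)
    (hσ : inAt x ip = σv) (hγ : T sp = γv) (hst : (tr q σv γv).st = 5) : M.Accepts x := by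
  apply accepts_of_rch (h.trans (Rch.single rfl))
  rw [step_eq q ip sp T h5 h6 hσ hγ rfl]
  exact hst

/-! ### Phase lemmas -/

lemma phA (n m l : ℕ) (w : List (Fin 3)) :
    ∀ d j, 1 ≤ j → j + d ≤ n →
      Rch (X n m l w) (cfg (1) (j + 1) (j + 1) (TA j)) (cfg (1) (j + d + 1) (j + d + 1) (TA (j + d))) := by
  intro d
  induction d with
  | zero => intro j _ _; exact Rch.refl _ _
  | succ d ih =>
    intro j h1 h2
    have hσ : inAt (X n m l w) (j + 1) = InSym.sym 0 := inAt_a n m l w (by omega) (by omega)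
    have hγ : TA j (j + 1) = 0 := vTA j (j + 1) (by omega) (by omega)
    have s1 : M.step (X n m l w) (cfg (1) (j + 1) (j + 1) (TA j)) = (cfg (1) (j + 2) (j + 2) (TA (j + 1))) := by
      rw [step_eq 1 (j + 1) (j + 1) (TA j) (by decide) (by decide) hσ hγ rfl]
      show (cfg (1) (moveIn (X n m l w).length (j + 1) Dir.right) (j + 2) (Function.update (TA j) (j + 1) 1) : M.Cfg) = _
      rw [moveIn_right (by rw [len_X]; omega), uTA j]
    have h3 := ih (j + 1) (by omega) (by omega)
    rw [show j + 1 + d = j + (d + 1) by omega] at h3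
    exact (Rch.single s1).trans h3

lemma phB (n m l : ℕ) (w : List (Fin 3)) :
    ∀ d, d ≤ m → d ≤ n →
      Rch (X n m l w) (cfg (2) (n + 1) (n) (TB n n)) (cfg (2) (n + 1 + d) (n - d) (TB (n - d) n)) := by
  intro d
  induction d with
  | zero => intro _ _; simp only [Nat.add_zero, Nat.sub_zero]; exact Rch.refl _ _
  | succ d ih =>
    intro h1 h2
    refine (ih (by omega) (by omega)).trans ?_
    have hσ : inAt (X n m l w) (n + 1 + d) = InSym.sym 1 := inAt_b n m l w (by omega) (by omega)
    have hγ : TB (n - d) n (n - d) = 1 := vTB1 _ _ (by omega)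
    have s : M.step (X n m l w) (cfg (2) (n + 1 + d) (n - d) (TB (n - d) n)) =
        cfg (2) (n + 1 + (d + 1)) (n - (d + 1)) (TB (n - (d + 1)) n) := by
      rw [step_eq 2 _ _ _ (by decide) (by decide) hσ hγ rfl]
      show (cfg (2) (moveIn (X n m l w).length (n + 1 + d) Dir.right) ((n - d) - 1) (Function.update (TB (n - d) n) (n - d) 2) : M.Cfg) = _
      rw [moveIn_right (by rw [len_X]; omega)]
      have e1 : n - d = (n - (d + 1)) + 1 := by omega
      rw [e1, uTBstep _ _ (by omega)]
      congr 1 <;> omega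
    exact Rch.single s

lemma phC (n m l : ℕ) (w : List (Fin 3)) :
    ∀ d, 2 * d ≤ l → d ≤ n →
      Rch (X n m l w) (cfg (3) (n + m + 1) (1) (TC 1 n)) (cfg (3) (n + m + 1 + 2 * d) (d + 1) (TC (d + 1) n)) := by
  intro d
  induction d with
  | zero => intro _ _; simp only [Nat.mul_zero, Nat.add_zero]; exact Rch.refl _ _
  | succ d ih =>
    intro h1 h2
    refine (ih (by omega) (by omega)).trans ?_
    have hσ1 : inAt (X n m l w) (n + m + 1 + 2 * d) = InSym.sym 2 :=
      inAt_c n m l w (by omega) (by omega)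
    have hγ1 : TC (d + 1) n (d + 1) = 2 := vTC2 _ _ (by omega) (by omega)
    have s1 : M.step (X n m l w) (cfg (3) (n + m + 1 + 2 * d) (d + 1) (TC (d + 1) n)) =
        (cfg (4) (n + m + 1 + 2 * d + 1) (d + 1) (TC (d + 1) n)) := by
      rw [step_eq 3 _ _ _ (by decide) (by decide) hσ1 hγ1 rfl]
      show (cfg (4) (moveIn (X n m l w).length (n + m + 1 + 2 * d) Dir.right) (d + 1) (Function.update (TC (d + 1) n) (d + 1) 2) : M.Cfg) = _
      rw [moveIn_right (by rw [len_X]; omega), upd_self _ _ _ hγ1]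
    have hσ2 : inAt (X n m l w) (n + m + 1 + 2 * d + 1) = InSym.sym 2 :=
      inAt_c n m l w (by omega) (by omega)
    have s2 : M.step (X n m l w) (cfg (4) (n + m + 1 + 2 * d + 1) (d + 1) (TC (d + 1) n)) =
        (cfg (3) (n + m + 1 + 2 * (d + 1)) (d + 2) (TC (d + 2) n)) := by
      rw [step_eq 4 _ _ _ (by decide) (by decide) hσ2 hγ1 rfl]
      show (cfg (3) (moveIn (X n m l w).length (n + m + 1 + 2 * d + 1) Dir.right) (d + 2) (Function.update (TC (d + 1) n) (d + 1) 4) : M.Cfg) = _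
      rw [moveIn_right (by rw [len_X]; omega), uTCstep d n]
      congr 1 <;> omega
    exact (Rch.single s1).trans (Rch.single s2)

/-! ### Reaching the end of phase A -/

lemma rInit (n m l : ℕ) (w : List (Fin 3)) :
    Rch (X n m l w) M.init (cfg (0) (1) (1) (TA 0)) := by
  have h0 : M.init = (cfg (0) (0) (0) (T0)) := rfl
  have s1 : M.step (X n m l w) (cfg (0) (0) (0) (T0)) = (cfg (0) (0) (1) (T0)) := by
    rw [step_eq 0 0 0 T0 (by decide) (by decide) rfl rfl rfl]
    show (cfg (0) (moveIn (X n m l w).length 0 Dir.stay) (1) (Function.update T0 0 6) : M.Cfg) = _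
    rw [moveIn_stay (by omega), upd_self T0 0 6 rfl]
  have s2 : M.step (X n m l w) (cfg (0) (0) (1) (T0)) = (cfg (0) (1) (1) (TA 0)) := by
    rw [step_eq 0 0 1 T0 (by decide) (by decide) rfl rfl rfl]
    show (cfg (0) (moveIn (X n m l w).length 0 Dir.right) (1) (Function.update T0 1 0) : M.Cfg) = _
    rw [moveIn_right (by omega), upd_self T0 1 0 rfl, TA0]
  rw [h0]
  exact (Rch.single s1).trans (Rch.single s2)

lemma rA (n m l : ℕ) (w : List (Fin 3)) (hn : 1 ≤ n) :
    Rch (X n m l w) M.init (cfg (1) (n + 1) (n + 1) (TA n)) := by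
  refine (rInit n m l w).trans ?_
  have hσ : inAt (X n m l w) 1 = InSym.sym 0 := inAt_a n m l w (by omega) (by omega)
  have hγ : TA 0 1 = 0 := vTA 0 1 (by omega) (by omega)
  have s : M.step (X n m l w) (cfg (0) (1) (1) (TA 0)) = (cfg (1) (2) (2) (TA 1)) := by
    rw [step_eq 0 1 1 (TA 0) (by decide) (by decide) hσ hγ rfl]
    show (cfg (1) (moveIn (X n m l w).length 1 Dir.right) (2) (Function.update (TA 0) 1 1) : M.Cfg) = _
    rw [moveIn_right (by rw [len_X]; omega), show (1 : ℕ) = 0 + 1 from rfl, uTA 0]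
  refine (Rch.single s).trans ?_
  have h3 := phA n m l w (n - 1) 1 (by omega) (by omega)
  rw [show 1 + (n - 1) = n by omega] at h3
  exact h3

end LabcSDA
namespace LabcSDA

lemma sigma_w (n m l : ℕ) (w : List (Fin 3)) (hw2 : w.head? ≠ some 2) :
    ∃ σv, inAt (X n m l w) (n + m + l + 1) = σv ∧ σv ≠ InSym.sym 2 := by
  cases w with
  | nil => exact ⟨.rend, inAt_nil n m l [] rfl (by omega), by decide⟩
  | cons d w' =>
    refine ⟨.sym d, inAt_hd n m l _ rfl, ?_⟩
    intro hc
    injection hc with h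
    simp [h] at hw2

lemma tr1ne : ∀ σ : InSym (Fin 3),
    σ ≠ .sym 0 → σ ≠ .sym 1 → σ ≠ .sym 2 → (tr 1 σ 0).st = 6 := by decide

theorem mainrun (n m l : ℕ) (w : List (Fin 3))
    (hy0 : (List.replicate m 1 ++ (List.replicate l 2 ++ w)).head? ≠ some 0)
    (hz1 : (List.replicate l 2 ++ w).head? ≠ some 1)
    (hw2 : w.head? ≠ some 2) :
    (m = n ∧ l = 2 * n ∧ w = [] → M.Accepts (X n m l w)) ∧
    (¬(m = n ∧ l = 2 * n ∧ w = []) → M.Rejects (X n m l w)) := by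
  rcases Nat.eq_zero_or_pos n with hn | hn
  · -- n = 0
    subst hn
    have r0 := rInit 0 m l w
    rcases Nat.eq_zero_or_pos m with hm | hm
    · subst hm
      simp only [List.replicate_zero, List.nil_append] at hy0
      rcases Nat.eq_zero_or_pos l with hl | hl
      · subst hl
        simp only [List.replicate_zero, List.nil_append] at hy0 hz1
        -- w must be empty
        have hwnil : w = [] := by
          cases w with
          | nil => rfl
          | cons d w' =>
            exfalso
            fin_cases d <;> simp_all
        subst hwnil
        constructor
        · intro _
          exact acc_of r0 (by decide) (by decide) (inAt_nil 0 0 0 [] rfl (by omega))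
            (vTA 0 1 (by omega) (by omega)) rfl
        · intro hc
          exact absurd ⟨rfl, rfl, rfl⟩ hc
      · -- l ≥ 1 : reject at first c
        refine ⟨fun hc => by omega, fun _ => ?_⟩
        exact rej_of r0 (by decide) (by decide)
          (inAt_c 0 0 l w (by omega) (by omega)) (vTA 0 1 (by omega) (by omega)) rfl
    · -- m ≥ 1 : see b with empty counter
      refine ⟨fun hc => by omega, fun _ => ?_⟩
      have hσ : inAt (X 0 m l w) 1 = InSym.sym 1 := inAt_b 0 m l w (by omega) (by omega)
      have s : M.step (X 0 m l w) (cfg 0 1 1 (TA 0)) = cfg 2 1 0 (TB 0 0) := by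
        rw [step_eq 0 1 1 (TA 0) (by decide) (by decide) hσ (vTA 0 1 (by omega) (by omega)) rfl]
        show (cfg 2 (moveIn (X 0 m l w).length 1 Dir.stay) 0
          (Function.update (TA 0) 1 3) : M.Cfg) = _
        rw [moveIn_stay (by rw [len_X]; omega), show (1:ℕ) = 0 + 1 from rfl, uTB 0]
      exact rej_of (r0.trans (Rch.single s)) (by decide) (by decide) hσ (vTB0 0) rfl
  · -- n ≥ 1
    have r1 := rA n m l w hn
    rcases Nat.eq_zero_or_pos m with hm | hm
    · -- m = 0 : reject (too few b's)
      subst hm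
      refine ⟨fun hc => by omega, fun _ => ?_⟩
      simp only [List.replicate_zero, List.nil_append] at hy0
      rcases Nat.eq_zero_or_pos l with hl | hl
      · subst hl
        simp only [List.replicate_zero, List.nil_append] at hy0 hz1
        obtain ⟨σv, hσ, hσ2⟩ := sigma_w n 0 0 w hw2
        simp only [Nat.add_zero] at hσ
        have hσ0 : σv ≠ InSym.sym 0 := by
          cases w with
          | nil => rw [inAt_nil n 0 0 [] rfl (by omega)] at hσ; subst hσ; decide
          | cons d w' =>
            rw [inAt_hd n 0 0 _ rfl] at hσ
            subst hσ
            intro hc; injection hc with h; simp [h] at hy0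
        have hσ1 : σv ≠ InSym.sym 1 := by
          cases w with
          | nil => rw [inAt_nil n 0 0 [] rfl (by omega)] at hσ; subst hσ; decide
          | cons d w' =>
            rw [inAt_hd n 0 0 _ rfl] at hσ
            subst hσ
            intro hc; injection hc with h; simp [h] at hz1
        have htr : (tr 1 σv 0).st = 6 := tr1ne σv hσ0 hσ1 hσ2
        exact rej_of r1 (by decide) (by decide) hσ (vTA n (n + 1) (by omega) (by omega)) htr
      · -- l ≥ 1 : c after a's
        exact rej_of r1 (by decide) (by decide)
          (inAt_c n 0 l w (by omega) (by omega)) (vTA n (n + 1) (by omega) (by omega)) rfl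
    · -- m ≥ 1 : enter phase B
      have hσb : inAt (X n m l w) (n + 1) = InSym.sym 1 := inAt_b n m l w (by omega) (by omega)
      have sB : M.step (X n m l w) (cfg 1 (n + 1) (n + 1) (TA n)) = cfg 2 (n + 1) n (TB n n) := by
        rw [step_eq 1 (n + 1) (n + 1) (TA n) (by decide) (by decide) hσb
          (vTA n (n + 1) (by omega) (by omega)) rfl]
        show (cfg 2 (moveIn (X n m l w).length (n + 1) Dir.stay) n
          (Function.update (TA n) (n + 1) 3) : M.Cfg) = _
        rw [moveIn_stay (by rw [len_X]; omega), uTB n]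
      have rB0 := r1.trans (Rch.single sB)
      rcases lt_trichotomy m n with hmn | hmn | hmn
      · -- m < n : b's run out early
        refine ⟨fun hc => by omega, fun _ => ?_⟩
        have rB := rB0.trans (phB n m l w m (le_refl m) (by omega))
        have hγ : TB (n - m) n (n - m) = 1 := vTB1 _ _ (by omega)
        rcases Nat.eq_zero_or_pos l with hl | hl
        · subst hl
          simp only [List.replicate_zero, List.nil_append] at hz1
          obtain ⟨σv, hσ, hσ2⟩ := sigma_w n m 0 w hw2
          simp only [Nat.add_zero] at hσ
          have hσ1 : σv ≠ InSym.sym 1 := by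
            cases w with
            | nil => rw [inAt_nil n m 0 [] rfl (by omega)] at hσ; subst hσ; decide
            | cons d w' =>
              rw [inAt_hd n m 0 _ rfl] at hσ
              subst hσ
              intro hc; injection hc with h; simp [h] at hz1
          rw [show n + m + 1 = n + 1 + m by omega] at hσ
          exact rej_of rB (by decide) (by decide) hσ hγ (by rw [tr2ne1 σv hσ1])
        · have hσ : inAt (X n m l w) (n + 1 + m) = InSym.sym 2 :=
            by rw [show n + 1 + m = n + m + 1 by omega]; exact inAt_c n m l w (by omega) (by omega)
          exact rej_of rB (by decide) (by decide) hσ hγ rfl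
      · -- m = n
        subst hmn
        have rB := rB0.trans (phB m m l w m (le_refl m) (le_refl m))
        simp only [Nat.sub_self] at rB
        rcases Nat.eq_zero_or_pos l with hl | hl
        · -- l = 0 : reject at lend
          subst hl
          refine ⟨fun hc => by omega, fun _ => ?_⟩
          simp only [List.replicate_zero, List.nil_append] at hz1
          obtain ⟨σv, hσ, hσ2⟩ := sigma_w m m 0 w hw2
          simp only [Nat.add_zero] at hσ
          rw [show m + m + 1 = m + 1 + m by omega] at hσ
          exact rej_of rB (by decide) (by decide) hσ (vTB0 m) (by rw [tr2ne2 σv hσ2])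
        · -- l ≥ 1 : enter phase C
          have hσc : inAt (X m m l w) (m + 1 + m) = InSym.sym 2 := by
            rw [show m + 1 + m = m + m + 1 by omega]
            exact inAt_c m m l w (by omega) (by omega)
          have sC : M.step (X m m l w) (cfg 2 (m + 1 + m) 0 (TB 0 m)) =
              cfg 3 (m + m + 1) 1 (TC 1 m) := by
            rw [step_eq 2 (m + 1 + m) 0 (TB 0 m) (by decide) (by decide) hσc (vTB0 m) rfl]
            show (cfg 3 (moveIn (X m m l w).length (m + 1 + m) Dir.stay) 1
              (Function.update (TB 0 m) 0 6) : M.Cfg) = _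
            rw [moveIn_stay (by rw [len_X]; omega), upd_self _ _ _ (vTB0 m), TB0TC m]
            congr 1 <;> omega
          have rC0 := rB.trans (Rch.single sC)
          rcases lt_trichotomy l (2 * m) with hlm | hlm | hlm
          · -- l < 2m : c's run out early
            refine ⟨fun hc => by omega, fun _ => ?_⟩
            obtain ⟨σv, hσw, hσ2⟩ := sigma_w m m l w hw2
            rcases Nat.even_or_odd l with ⟨d, hd⟩ | ⟨d, hd⟩
            · have rC := rC0.trans (phC m m l w d (by omega) (by omega))
              have hγ : TC (d + 1) m (d + 1) = 2 := vTC2 _ _ (by omega) (by omega)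
              rw [show m + m + l + 1 = m + m + 1 + 2 * d by omega] at hσw
              exact rej_of rC (by decide) (by decide) hσw hγ (by rw [tr3ne2 σv hσ2])
            · have rC := rC0.trans (phC m m l w d (by omega) (by omega))
              have hγ : TC (d + 1) m (d + 1) = 2 := vTC2 _ _ (by omega) (by omega)
              have hσ1 : inAt (X m m l w) (m + m + 1 + 2 * d) = InSym.sym 2 :=
                inAt_c m m l w (by omega) (by omega)
              have s1 : M.step (X m m l w) (cfg 3 (m + m + 1 + 2 * d) (d + 1) (TC (d + 1) m)) =
                  cfg 4 (m + m + 1 + 2 * d + 1) (d + 1) (TC (d + 1) m) := by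
                rw [step_eq 3 _ _ _ (by decide) (by decide) hσ1 hγ rfl]
                show (cfg 4 (moveIn (X m m l w).length (m + m + 1 + 2 * d) Dir.right) (d + 1)
                  (Function.update (TC (d + 1) m) (d + 1) 2) : M.Cfg) = _
                rw [moveIn_right (by rw [len_X]; omega), upd_self _ _ _ hγ]
              rw [show m + m + l + 1 = m + m + 1 + 2 * d + 1 by omega] at hσw
              exact rej_of (rC.trans (Rch.single s1)) (by decide) (by decide) hσw hγ
                (by rw [tr4ne2 σv hσ2])
          · -- l = 2m
            have rC := rC0.trans (phC m m l w m (by omega) (le_refl m))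
            have hγX : TC (m + 1) m (m + 1) = 3 := vTCX m
            constructor
            · rintro ⟨-, -, hwnil⟩
              subst hwnil
              have hσ : inAt (X m m l []) (m + m + 1 + 2 * m) = InSym.rend :=
                inAt_nil m m l [] rfl (by omega)
              exact acc_of rC (by decide) (by decide) hσ hγX rfl
            · intro hc
              have hwne : w ≠ [] := by
                intro hwnil
                exact hc ⟨rfl, by omega, hwnil⟩
              cases w with
              | nil => exact absurd rfl hwne
              | cons d w' =>
                have hσ : inAt (X m m l (d :: w')) (m + m + 1 + 2 * m) = InSym.sym d := by
                  rw [show m + m + 1 + 2 * m = m + m + l + 1 by omega]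
                  exact inAt_hd m m l _ rfl
                exact rej_of rC (by decide) (by decide) hσ hγX (by rw [tr33 d])
          · -- l > 2m : too many c's
            refine ⟨fun hc => by omega, fun _ => ?_⟩
            have rC := rC0.trans (phC m m l w m (by omega) (le_refl m))
            have hσ : inAt (X m m l w) (m + m + 1 + 2 * m) = InSym.sym 2 :=
              inAt_c m m l w (by omega) (by omega)
            exact rej_of rC (by decide) (by decide) hσ (vTCX m) rfl
      · -- m > n : too many b's
        refine ⟨fun hc => by omega, fun _ => ?_⟩
        have rB := rB0.trans (phB n m l w n (by omega) (le_refl n))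
        simp only [Nat.sub_self] at rB
        have hσ : inAt (X n m l w) (n + 1 + n) = InSym.sym 1 := by
          rw [show n + 1 + n = n + n + 1 by omega]
          exact inAt_b n m l w (by omega) (by omega)
        exact rej_of rB (by decide) (by decide) hσ (vTB0 n) rfl

end LabcSDA
namespace LabcSDA

lemma run_succ (x : List (Fin 3)) (t : ℕ) : M.run x (t + 1) = M.step x (M.run x t) :=
  Function.iterate_succ_apply' _ _ _

lemma step_halted {x : List (Fin 3)} {c : M.Cfg} (h : M.Halted c) : M.step x c = c := by
  unfold SDA.Halted at h
  unfold SDA.step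
  rw [if_pos h]

lemma run_absorb {x : List (Fin 3)} {t s : ℕ} (hts : t ≤ s) (h : M.Halted (M.run x t)) :
    M.run x s = M.run x t := by
  obtain ⟨d, rfl⟩ := Nat.exists_eq_add_of_le hts
  clear hts
  induction d with
  | zero => rfl
  | succ d ih =>
    rw [show t + (d + 1) = (t + d) + 1 from rfl, run_succ, ih, step_halted h]

lemma not_both {x : List (Fin 3)} (ha : M.Accepts x) (hr : M.Rejects x) : False := by
  obtain ⟨t1, h1⟩ := ha
  obtain ⟨t2, h2⟩ := hr
  have e1 : (M.run x t1).st = (5 : Fin 7) :=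
    Finset.mem_singleton.mp (h1 : (M.run x t1).st ∈ ({5} : Finset (Fin 7)))
  have e2 : (M.run x t2).st = (6 : Fin 7) :=
    Finset.mem_singleton.mp (h2 : (M.run x t2).st ∈ ({6} : Finset (Fin 7)))
  rcases le_total t1 t2 with hle | hle
  · rw [run_absorb hle (Or.inl h1)] at e2
    exact absurd (e1.symm.trans e2) (by decide : ¬((5 : Fin 7) = 6))
  · rw [run_absorb hle (Or.inr h2)] at e1
    exact absurd (e1.symm.trans e2) (by decide : ¬((5 : Fin 7) = 6))

lemma decomp1 (c : Fin 3) (x : List (Fin 3)) :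
    ∃ n y, x = List.replicate n c ++ y ∧ y.head? ≠ some c := by
  induction x with
  | nil => exact ⟨0, [], rfl, by simp⟩
  | cons a t ih =>
    obtain ⟨n, y, h1, h2⟩ := ih
    by_cases h : a = c
    · subst h
      exact ⟨n + 1, y, by rw [List.replicate_succ, List.cons_append, ← h1], h2⟩
    · exact ⟨0, a :: t, rfl, by simp [h]⟩

lemma repHead (c : Fin 3) : ∀ n n' (y y' : List (Fin 3)),
    List.replicate n c ++ y = List.replicate n' c ++ y' →
    y.head? ≠ some c → y'.head? ≠ some c → n = n' ∧ y = y' := by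
  intro n
  induction n with
  | zero =>
    intro n' y y' he h1 h2
    cases n' with
    | zero => exact ⟨rfl, by simpa using he⟩
    | succ k =>
      exfalso
      rw [List.replicate_succ] at he
      simp only [List.replicate_zero, List.nil_append, List.cons_append] at he
      exact h1 (by rw [he]; rfl)
  | succ k ih =>
    intro n' y y' he h1 h2
    cases n' with
    | zero =>
      exfalso
      rw [List.replicate_succ] at he
      simp only [List.replicate_zero, List.nil_append, List.cons_append] at he
      exact h2 (by rw [← he]; rfl)
    | succ k' =>
      rw [List.replicate_succ, List.replicate_succ] at he
      simp only [List.cons_append] at he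
      injection he with _ he2
      obtain ⟨e1, e2⟩ := ih k' y y' he2 h1 h2
      exact ⟨by omega, e2⟩

lemma head_rep1 (N : ℕ) :
    (List.replicate N (1:Fin 3) ++ (List.replicate (2*N) 2 ++ [])).head? ≠ some 0 := by
  cases N with
  | zero =>
    simp only [List.replicate_zero, List.nil_append, List.append_nil]
    cases h : 2 * 0 <;> simp [List.replicate_succ]
  | succ k => simp [List.replicate_succ]

lemma head_rep2 (k : ℕ) :
    (List.replicate k (2:Fin 3) ++ ([]:List (Fin 3))).head? ≠ some 1 := by
  cases k <;> simp [List.replicate_succ]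

lemma head_nil : (([]:List (Fin 3))).head? ≠ some 2 := by simp

lemma memX (n m l : ℕ) (w : List (Fin 3))
    (hy0 : (List.replicate m 1 ++ (List.replicate l 2 ++ w)).head? ≠ some 0)
    (hz1 : (List.replicate l 2 ++ w).head? ≠ some 1)
    (hw2 : w.head? ≠ some 2) :
    X n m l w ∈ Labc ↔ (m = n ∧ l = 2 * n ∧ w = []) := by
  constructor
  · rintro ⟨N, hN⟩
    have hN' : X n m l w = List.replicate N 0 ++
        (List.replicate N 1 ++ (List.replicate (2*N) 2 ++ [])) := by
      rw [X] at hN ⊢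
      rw [hN]
      simp [List.append_assoc]
    obtain ⟨e1, hY⟩ := repHead 0 n N _ _ hN' hy0 (head_rep1 N)
    obtain ⟨e2, hZ⟩ := repHead 1 m N _ _ hY hz1 (head_rep2 (2*N))
    obtain ⟨e3, hW⟩ := repHead 2 l (2*N) _ _ hZ hw2 head_nil
    exact ⟨by omega, by omega, hW⟩
  · rintro ⟨rfl, rfl, rfl⟩
    refine ⟨m, ?_⟩
    simp [X, List.append_assoc]

theorem recog : M.Recognizes Labc := by
  intro x
  obtain ⟨n, y, hx, hy0⟩ := decomp1 0 x
  obtain ⟨m, z, hyz, hz1⟩ := decomp1 1 y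
  obtain ⟨l, w, hzw, hw2⟩ := decomp1 2 z
  subst hzw
  subst hyz
  subst hx
  have hm := memX n m l w hy0 hz1 hw2
  have hmain := mainrun n m l w hy0 hz1 hw2
  constructor
  · constructor
    · intro hmem
      exact hmain.1 (hm.mp hmem)
    · intro hacc
      by_contra hmem
      exact not_both hacc (hmain.2 (fun hc => hmem (hm.mpr hc)))
  · constructor
    · intro hmem
      exact hmain.2 (fun hc => hmem (hm.mpr hc))
    · intro hrej hmem
      exact not_both (hmain.1 (hm.mp hmem)) hrej

theorem Labc_in_4SDA : Labc ∈ kSDA 4 (Fin 3) := ⟨M, M_wf, M_ds, recog⟩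

end LabcSDA
namespace LabcCFL

open ContextFreeGrammar

variable {T : Type}

/-- Bounded-depth parse forests for a context-free grammar. -/
inductive DerL (g : ContextFreeGrammar.{0} T) : ℕ → List (Symbol T g.NT) → List T → Prop
  | nil (n : ℕ) : DerL g n [] []
  | term {n : ℕ} {a : T} {l : List (Symbol T g.NT)} {ws : List T}
      (h : DerL g n l ws) : DerL g n (Symbol.terminal a :: l) (a :: ws)
  | rule {n : ℕ} {r : ContextFreeRule T g.NT} {l : List (Symbol T g.NT)} {w ws : List T}
      (hr : r ∈ g.rules) (hw : DerL g n r.output w) (hl : DerL g (n + 1) l ws) :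
      DerL g (n + 1) (Symbol.nonterminal r.input :: l) (w ++ ws)

variable {g : ContextFreeGrammar.{0} T}

lemma nil_inv {n : ℕ} {w : List T} (h : DerL g n [] w) : w = [] := by
  cases h; rfl

lemma term_inv {n : ℕ} {a : T} {w : List T} (h : DerL g n [Symbol.terminal a] w) : w = [a] := by
  cases h with
  | term h' => rw [nil_inv h']

lemma nt_inv {n : ℕ} {B : g.NT} {w : List T} (h : DerL g n [Symbol.nonterminal B] w) :
    ∃ k r, n = k + 1 ∧ r ∈ g.rules ∧ r.input = B ∧ DerL g k r.output w := by
  cases h with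
  | rule hr hw hl =>
    have := nil_inv hl
    subst this
    exact ⟨_, _, rfl, hr, rfl, by simpa using hw⟩

lemma mono {n : ℕ} {l : List (Symbol T g.NT)} {w : List T} (h : DerL g n l w) :
    ∀ {n'}, n ≤ n' → DerL g n' l w := by
  induction h with
  | nil => intro n' _; exact .nil n'
  | term h ih => intro n' hn; exact .term (ih hn)
  | rule hr hw hl ihw ihl =>
    intro n' hn
    cases n' with
    | zero => omega
    | succ k => exact .rule hr (ihw (by omega)) (ihl (by omega))

lemma derl_append {n : ℕ} {l1 l2 : List (Symbol T g.NT)} {w1 w2 : List T}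
    (h1 : DerL g n l1 w1) (h2 : DerL g n l2 w2) : DerL g n (l1 ++ l2) (w1 ++ w2) := by
  revert h2
  induction h1 with
  | nil => intro h2; simpa using h2
  | term h ih => intro h2; exact .term (ih h2)
  | rule hr hw hl ihw ihl =>
    intro h2
    rw [List.cons_append, List.append_assoc]
    exact .rule hr hw (ihl h2)

lemma derl_split {n : ℕ} {L : List (Symbol T g.NT)} {w : List T} (h : DerL g n L w) :
    ∀ l1 l2, L = l1 ++ l2 →
      ∃ w1 w2, w = w1 ++ w2 ∧ DerL g n l1 w1 ∧ DerL g n l2 w2 := by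
  induction h with
  | nil =>
    intro l1 l2 he
    obtain ⟨h1, h2⟩ := List.append_eq_nil_iff.mp he.symm
    subst h1; subst h2
    exact ⟨[], [], rfl, .nil _, .nil _⟩
  | term h ih =>
    rename_i n a l ws
    intro l1 l2 he
    cases l1 with
    | nil =>
      simp only [List.nil_append] at he
      subst he
      exact ⟨[], _, rfl, .nil _, .term h⟩
    | cons s l1' =>
      rw [List.cons_append] at he
      injection he with he1 he2
      subst he1
      obtain ⟨w1, w2, hw, d1, d2⟩ := ih l1' l2 he2
      exact ⟨a :: w1, w2, by rw [hw]; rfl, .term d1, d2⟩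
  | rule hr hw hl ihw ihl =>
    rename_i n r l w ws
    intro l1 l2 he
    cases l1 with
    | nil =>
      simp only [List.nil_append] at he
      subst he
      exact ⟨[], _, rfl, .nil _, .rule hr hw hl⟩
    | cons s l1' =>
      rw [List.cons_append] at he
      injection he with he1 he2
      subst he1
      obtain ⟨w1, w2, hw2, d1, d2⟩ := ihl l1' l2 he2
      exact ⟨w ++ w1, w2, by rw [hw2, List.append_assoc], .rule hr hw d1, d2⟩

lemma all_terminal (g : ContextFreeGrammar.{0} T) :
    ∀ w : List T, DerL g 0 (w.map Symbol.terminal) w := by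
  intro w
  induction w with
  | nil => exact .nil 0
  | cons a t ih => exact .term ih

lemma complete {l : List (Symbol T g.NT)} {w : List T}
    (h : g.Derives l (w.map Symbol.terminal)) : ∃ n, DerL g n l w := by
  induction h using Relation.ReflTransGen.head_induction_on with
  | refl => exact ⟨0, all_terminal g w⟩
  | head hstep _ ih =>
    obtain ⟨n, d⟩ := ih
    obtain ⟨r, hr, hrw⟩ := hstep
    obtain ⟨p, q, hu, hv⟩ := hrw.exists_parts
    rw [hv] at d
    obtain ⟨w1, w23, e, d1, d23⟩ := derl_split d p (r.output ++ q) (by rw [List.append_assoc])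
    obtain ⟨w2, w3, e2, d2, d3⟩ := derl_split d23 r.output q rfl
    refine ⟨n + 1, ?_⟩
    rw [hu]
    have dmid : DerL g (n + 1) [Symbol.nonterminal r.input] w2 := by
      have := DerL.rule hr d2 (DerL.nil (n + 1))
      simpa using this
    have := derl_append (derl_append (mono d1 (Nat.le_succ n)) dmid) (mono d3 (Nat.le_succ n))
    rw [e, e2, ← List.append_assoc]
    exact this

lemma sound {n : ℕ} {l : List (Symbol T g.NT)} {w : List T} (h : DerL g n l w) :
    g.Derives l (w.map Symbol.terminal) := by
  induction h with
  | nil => exact Derives.refl _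
  | term h ih =>
    rename_i n a l ws
    have := ih.append_left [Symbol.terminal a]
    simpa using this
  | rule hr hw hl ihw ihl =>
    rename_i n r l w ws
    refine Produces.trans_derives ⟨r, hr, ContextFreeRule.Rewrites.head l⟩ ?_
    rw [List.map_append]
    exact (ihw.append_right l).trans (ihl.append_left (w.map Symbol.terminal))

end LabcCFL
namespace LabcCFL

open ContextFreeGrammar

variable {T : Type} {g : ContextFreeGrammar.{0} T}

noncomputable def NTS (g : ContextFreeGrammar.{0} T) [DecidableEq g.NT] : Finset g.NT :=
  g.rules.image ContextFreeRule.input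

def bnd (g : ContextFreeGrammar.{0} T) : ℕ := g.rules.sup fun r => r.output.length

lemma output_len {r : ContextFreeRule T g.NT} (hr : r ∈ g.rules) : r.output.length ≤ bnd g :=
  Finset.le_sup (f := fun r => r.output.length) hr

lemma pick {n : ℕ} {l : List (Symbol T g.NT)} {w : List T} (h : DerL g n l w) (hne : w ≠ []) :
    ∃ s1 sym s2 w1 wc w2, l = s1 ++ [sym] ++ s2 ∧ w = w1 ++ wc ++ w2 ∧
      DerL g n s1 w1 ∧ DerL g n [sym] wc ∧ DerL g n s2 w2 ∧
      w.length ≤ l.length * wc.length := by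
  induction h with
  | nil => exact absurd rfl hne
  | term h ih =>
    rename_i n a l ws
    by_cases hws : ws = []
    · subst hws
      refine ⟨[], Symbol.terminal a, l, [], [a], [], rfl, rfl, .nil _, .term (.nil _), h, ?_⟩
      simp
    · obtain ⟨s1, sym, s2, w1, wc, w2, e1, e2, d1, dc, d2, hb⟩ := ih hws
      have hwc : 1 ≤ wc.length := by
        rcases Nat.eq_zero_or_pos wc.length with h0 | h1
        · exfalso
          rw [h0, Nat.mul_zero, Nat.le_zero, List.length_eq_zero_iff] at hb
          exact hws hb
        · exact h1
      refine ⟨Symbol.terminal a :: s1, sym, s2, a :: w1, wc, w2,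
        by rw [e1]; rfl, by rw [e2]; rfl, .term d1, dc, d2, ?_⟩
      simp only [List.length_cons]
      calc ws.length + 1 ≤ l.length * wc.length + wc.length := by omega
        _ = (l.length + 1) * wc.length := by ring
  | rule hr hw hl ihw ihl =>
    rename_i n r l wr ws
    have hhead : DerL g (n + 1) [Symbol.nonterminal r.input] wr := by
      have := DerL.rule hr hw (DerL.nil (n + 1))
      simpa using this
    by_cases hws : ws = []
    · subst hws
      have hwr : wr ≠ [] := by simpa using hne
      have hwr1 : 1 ≤ wr.length := List.length_pos_iff.mpr hwr
      refine ⟨[], Symbol.nonterminal r.input, l, [], wr, [], rfl, by simp, .nil _, hhead, hl, ?_⟩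
      simp only [List.append_nil, List.length_cons]
      nlinarith
    · obtain ⟨s1, sym, s2, w1, wc, w2, e1, e2, d1, dc, d2, hb⟩ := ihl hws
      have hwc : 1 ≤ wc.length := by
        rcases Nat.eq_zero_or_pos wc.length with h0 | h1
        · exfalso
          rw [h0, Nat.mul_zero, Nat.le_zero, List.length_eq_zero_iff] at hb
          exact hws hb
        · exact h1
      by_cases hcmp : wr.length ≤ wc.length
      · refine ⟨Symbol.nonterminal r.input :: s1, sym, s2, wr ++ w1, wc, w2,
          by rw [e1]; rfl, by rw [e2]; simp [List.append_assoc], .rule hr hw d1, dc, d2, ?_⟩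
        simp only [List.length_cons, List.length_append]
        calc wr.length + ws.length ≤ wc.length + l.length * wc.length := by omega
          _ = (l.length + 1) * wc.length := by ring
      · push_neg at hcmp
        refine ⟨[], Symbol.nonterminal r.input, l, [], wr, ws, rfl, by simp, .nil _, hhead, hl, ?_⟩
        simp only [List.length_cons, List.length_append]
        have : l.length * wc.length ≤ l.length * wr.length := Nat.mul_le_mul_left _ (by omega)
        calc wr.length + ws.length ≤ wr.length + l.length * wc.length := by omega
          _ ≤ wr.length + l.length * wr.length := by omega
          _ = (l.length + 1) * wr.length := by ring

def Pumped (g : ContextFreeGrammar.{0} T) (A : g.NT) (ww : List T) : Prop :=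
  ∃ x u y v z B', ww = x ++ u ++ y ++ v ++ z ∧ (u ≠ [] ∨ v ≠ []) ∧
    g.Derives [Symbol.nonterminal A]
      (x.map Symbol.terminal ++ [Symbol.nonterminal B'] ++ z.map Symbol.terminal) ∧
    g.Derives [Symbol.nonterminal B']
      (u.map Symbol.terminal ++ [Symbol.nonterminal B'] ++ v.map Symbol.terminal) ∧
    g.Derives [Symbol.nonterminal B'] (y.map Symbol.terminal)

lemma master [DecidableEq g.NT] : ∀ (n : ℕ) (B : g.NT) (wB : List T),
    DerL g n [Symbol.nonterminal B] wB →
    ∀ (A : g.NT) (x z : List T) (s : Finset g.NT),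
    g.Derives [Symbol.nonterminal A]
      (x.map Symbol.terminal ++ [Symbol.nonterminal B] ++ z.map Symbol.terminal) →
    (∀ C ∈ s, ∃ x1 z1 x2 z2, x = x1 ++ x2 ∧ z = z2 ++ z1 ∧
      g.Derives [Symbol.nonterminal A]
        (x1.map Symbol.terminal ++ [Symbol.nonterminal C] ++ z1.map Symbol.terminal) ∧
      g.Derives [Symbol.nonterminal C]
        (x2.map Symbol.terminal ++ [Symbol.nonterminal B] ++ z2.map Symbol.terminal) ∧
      (x2 ≠ [] ∨ z2 ≠ [])) →
    s ⊆ NTS g →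
    bnd g ^ ((NTS g).card + 1 - s.card) < wB.length →
    Pumped g A (x ++ wB ++ z) := by
  intro n
  induction n with
  | zero =>
    intro B wB h A x z s hA hs hsub hlen
    obtain ⟨k, r, hk, -, -, -⟩ := nt_inv h
    omega
  | succ n ih =>
    intro B wB h A x z s hA hs hsub hlen
    by_cases hBs : B ∈ s
    · obtain ⟨x1, z1, x2, z2, ex, ez, hA1, hCB, hne⟩ := hs B hBs
      refine ⟨x1, x2, wB, z2, z1, B, ?_, hne, hA1, hCB, sound h⟩
      rw [ex, ez]
      simp [List.append_assoc]
    · obtain ⟨k, r, hk, hr, hinp, hw⟩ := nt_inv h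
      have hkn : k = n := by omega
      subst hkn
      have hwne : wB ≠ [] := by
        intro hc
        rw [hc] at hlen
        simp at hlen
      obtain ⟨s1, sym, s2, w1, wc, w2, e1, e2, d1, dc, d2, hb⟩ := pick hw hwne
      have hble : wB.length ≤ bnd g * wc.length :=
        le_trans hb (Nat.mul_le_mul_right _ (output_len hr))
      have hcard : s.card ≤ (NTS g).card := Finset.card_le_card hsub
      have hBnts : B ∈ NTS g := by
        rw [← hinp]
        exact Finset.mem_image_of_mem _ hr
      have hbpos : 1 ≤ bnd g := by
        rcases Nat.eq_zero_or_pos (bnd g) with h0 | h1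
        · exfalso
          rw [h0, Nat.zero_mul, Nat.le_zero, List.length_eq_zero_iff] at hble
          exact hwne hble
        · exact h1
      cases sym with
      | terminal a =>
        exfalso
        have hwc : wc = [a] := term_inv dc
        have h1 : wB.length ≤ bnd g := by
          rw [hwc] at hble
          simpa using hble
        have h2 : bnd g ≤ bnd g ^ ((NTS g).card + 1 - s.card) := by
          conv_lhs => rw [← pow_one (bnd g)]
          exact Nat.pow_le_pow_right hbpos (by omega)
        omega
      | nonterminal B' =>
        have hBB : g.Derives [Symbol.nonterminal B]
            (w1.map Symbol.terminal ++ [Symbol.nonterminal B'] ++ w2.map Symbol.terminal) := by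
          have h0 : g.Produces [Symbol.nonterminal B] r.output := by
            refine ⟨r, hr, ?_⟩
            rw [← hinp]
            exact ContextFreeRule.Rewrites.input_output
          refine h0.trans_derives ?_
          rw [e1]
          have t1 : g.Derives (s1 ++ ([Symbol.nonterminal B'] ++ s2))
              (w1.map Symbol.terminal ++ ([Symbol.nonterminal B'] ++ s2)) :=
            (sound d1).append_right _
          have t2 : g.Derives (w1.map Symbol.terminal ++ ([Symbol.nonterminal B'] ++ s2))
              (w1.map Symbol.terminal ++ ([Symbol.nonterminal B'] ++ w2.map Symbol.terminal)) :=
            Derives.append_left ((sound d2).append_left [Symbol.nonterminal B']) _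
          simp only [List.append_assoc]
          exact t1.trans t2
        have hA' : g.Derives [Symbol.nonterminal A]
            ((x ++ w1).map Symbol.terminal ++ [Symbol.nonterminal B'] ++
              ((w2 ++ z).map Symbol.terminal)) := by
          refine hA.trans ?_
          rw [List.map_append, List.map_append]
          have := (hBB.append_right (z.map Symbol.terminal)).append_left (x.map Symbol.terminal)
          simpa [List.append_assoc] using this
        have hwclen : wc.length ≤ wB.length := by rw [e2]; simp only [List.length_append]; omega
        rcases eq_or_lt_of_le hwclen with heq | hlt
        · -- no growth : same set
          have hlw : w1.length = 0 ∧ w2.length = 0 := by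
            have := congrArg List.length e2
            simp only [List.length_append] at this
            omega
          have hw1 : w1 = [] := List.eq_nil_of_length_eq_zero hlw.1
          have hw2 : w2 = [] := List.eq_nil_of_length_eq_zero hlw.2
          subst hw1; subst hw2
          have hwB : wB = wc := by simpa using e2
          subst hwB
          have hBB' : g.Derives [Symbol.nonterminal B] [Symbol.nonterminal B'] := by
            simpa using hBB
          have hs' : ∀ C ∈ s, ∃ x1 z1 x2 z2, x = x1 ++ x2 ∧ z = z2 ++ z1 ∧
              g.Derives [Symbol.nonterminal A]
                (x1.map Symbol.terminal ++ [Symbol.nonterminal C] ++ z1.map Symbol.terminal) ∧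
              g.Derives [Symbol.nonterminal C]
                (x2.map Symbol.terminal ++ [Symbol.nonterminal B'] ++ z2.map Symbol.terminal) ∧
              (x2 ≠ [] ∨ z2 ≠ []) := by
            intro C hC
            obtain ⟨x1, z1, x2, z2, ex, ez, hA1, hCB, hne⟩ := hs C hC
            refine ⟨x1, z1, x2, z2, ex, ez, hA1, ?_, hne⟩
            refine hCB.trans ?_
            have := Derives.append_left
              ((hBB'.append_right (z2.map Symbol.terminal))) (x2.map Symbol.terminal)
            simpa [List.append_assoc] using this
          have hA'' : g.Derives [Symbol.nonterminal A]
              (x.map Symbol.terminal ++ [Symbol.nonterminal B'] ++ z.map Symbol.terminal) := by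
            simpa using hA'
          exact ih B' _ dc A x z s hA'' hs' hsub hlen
        · -- strict growth : insert B
          have hsub' : insert B s ⊆ NTS g := Finset.insert_subset hBnts hsub
          have hcard' : (insert B s).card = s.card + 1 := Finset.card_insert_of_notMem hBs
          have hslt : s.card < (NTS g).card := by
            have := Finset.card_le_card hsub'
            omega
          have hlen' : bnd g ^ ((NTS g).card + 1 - (insert B s).card) < wc.length := by
            have e3 : (NTS g).card + 1 - s.card =
                ((NTS g).card + 1 - (insert B s).card) + 1 := by rw [hcard']; omega
            rw [e3, pow_succ] at hlen
            by_contra hcon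
            push_neg at hcon
            have h1 : wB.length ≤ bnd g * (bnd g ^ ((NTS g).card + 1 - (insert B s).card)) :=
              le_trans hble (Nat.mul_le_mul_left _ hcon)
            rw [Nat.mul_comm] at h1
            exact Nat.lt_irrefl _ (lt_of_lt_of_le hlen h1)
          have hnonempty : w1 ≠ [] ∨ w2 ≠ [] := by
            by_contra hcon
            push_neg at hcon
            obtain ⟨hc1, hc2⟩ := hcon
            subst hc1; subst hc2
            rw [e2] at hlt
            simp at hlt
          have hs' : ∀ C ∈ insert B s, ∃ x1 z1 x2 z2,
              x ++ w1 = x1 ++ x2 ∧ w2 ++ z = z2 ++ z1 ∧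
              g.Derives [Symbol.nonterminal A]
                (x1.map Symbol.terminal ++ [Symbol.nonterminal C] ++ z1.map Symbol.terminal) ∧
              g.Derives [Symbol.nonterminal C]
                (x2.map Symbol.terminal ++ [Symbol.nonterminal B'] ++ z2.map Symbol.terminal) ∧
              (x2 ≠ [] ∨ z2 ≠ []) := by
            intro C hC
            rcases Finset.mem_insert.mp hC with rfl | hCs
            · exact ⟨x, z, w1, w2, rfl, rfl, hA, hBB, hnonempty⟩
            · obtain ⟨x1, z1, x2, z2, ex, ez, hA1, hCB, hne2⟩ := hs C hCs
              refine ⟨x1, z1, x2 ++ w1, w2 ++ z2, ?_, ?_, hA1, ?_, ?_⟩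
              · rw [ex, List.append_assoc]
              · rw [ez, List.append_assoc]
              · refine hCB.trans ?_
                have := Derives.append_left
                  ((hBB.append_right (z2.map Symbol.terminal))) (x2.map Symbol.terminal)
                simpa [List.map_append, List.append_assoc] using this
              · rcases hne2 with h | h
                · exact Or.inl (fun hc => h (List.append_eq_nil_iff.mp hc).1)
                · exact Or.inr (fun hc => h (List.append_eq_nil_iff.mp hc).2)
          have hres := ih B' wc dc A (x ++ w1) (w2 ++ z) (insert B s) hA' hs' hsub' hlen'
          have eword : (x ++ w1) ++ wc ++ (w2 ++ z) = x ++ wB ++ z := by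
            rw [e2]
            simp [List.append_assoc]
          rwa [eword] at hres

end LabcCFL
namespace LabcCFL

open ContextFreeGrammar

variable {T : Type} {g : ContextFreeGrammar.{0} T}

lemma pump [DecidableEq g.NT] {z : List T} (hz : z ∈ g.language)
    (hlen : bnd g ^ ((NTS g).card + 1) < z.length) :
    ∃ x u y v zz, z = x ++ u ++ y ++ v ++ zz ∧ (u ≠ [] ∨ v ≠ []) ∧
      x ++ (u ++ (u ++ (y ++ (v ++ (v ++ zz))))) ∈ g.language := by
  rw [mem_language_iff] at hz
  obtain ⟨n, d⟩ := complete hz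
  have hm := master n g.initial z d g.initial [] [] ∅ (by simpa using Derives.refl _)
    (by simp) (Finset.empty_subset _) (by simpa using hlen)
  rw [show ([] : List T) ++ z ++ [] = z by simp] at hm
  obtain ⟨x, u, y, v, zz, B', hdec, hne, h1, h2, h3⟩ := hm
  refine ⟨x, u, y, v, zz, by simpa [List.append_assoc] using hdec, hne, ?_⟩
  rw [mem_language_iff]
  have T1 : g.Derives [Symbol.nonterminal g.initial]
      (x.map Symbol.terminal ++ ([Symbol.nonterminal B'] ++ zz.map Symbol.terminal)) := by
    simpa [List.append_assoc] using h1
  have T2 : g.Derives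
      (x.map Symbol.terminal ++ ([Symbol.nonterminal B'] ++ zz.map Symbol.terminal))
      (x.map Symbol.terminal ++ (u.map Symbol.terminal ++ ([Symbol.nonterminal B'] ++
        (v.map Symbol.terminal ++ zz.map Symbol.terminal)))) := by
    have := (h2.append_right (zz.map Symbol.terminal)).append_left (x.map Symbol.terminal)
    simpa [List.append_assoc] using this
  have T3 : g.Derives
      (x.map Symbol.terminal ++ (u.map Symbol.terminal ++ ([Symbol.nonterminal B'] ++
        (v.map Symbol.terminal ++ zz.map Symbol.terminal))))
      (x.map Symbol.terminal ++ (u.map Symbol.terminal ++ (u.map Symbol.terminal ++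
        ([Symbol.nonterminal B'] ++ (v.map Symbol.terminal ++ (v.map Symbol.terminal ++
          zz.map Symbol.terminal)))))) := by
    have := (h2.append_right (v.map Symbol.terminal ++ zz.map Symbol.terminal)).append_left
      (x.map Symbol.terminal ++ u.map Symbol.terminal)
    simpa [List.append_assoc] using this
  have T4 : g.Derives
      (x.map Symbol.terminal ++ (u.map Symbol.terminal ++ (u.map Symbol.terminal ++
        ([Symbol.nonterminal B'] ++ (v.map Symbol.terminal ++ (v.map Symbol.terminal ++
          zz.map Symbol.terminal))))))
      (x.map Symbol.terminal ++ (u.map Symbol.terminal ++ (u.map Symbol.terminal ++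
        (y.map Symbol.terminal ++ (v.map Symbol.terminal ++ (v.map Symbol.terminal ++
          zz.map Symbol.terminal)))))) := by
    have := (h3.append_right (v.map Symbol.terminal ++ (v.map Symbol.terminal ++
      zz.map Symbol.terminal))).append_left
      (x.map Symbol.terminal ++ (u.map Symbol.terminal ++ u.map Symbol.terminal))
    simpa [List.append_assoc] using this
  have := ((T1.trans T2).trans T3).trans T4
  simpa [List.map_append, List.append_assoc] using this

end LabcCFL

section NotCF

open LabcCFL

lemma cnt_rep (e c : Fin 3) (k : ℕ) :
    List.count e (List.replicate k c) = if c = e then k else 0 := by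
  rw [List.count_replicate]
  simp [beq_iff_eq]

lemma pairwise_cross {c1 c2 : Fin 3} (h : c1 ≤ c2) {k1 k2 : ℕ} (a : Fin 3)
    (ha : a ∈ List.replicate k1 c1) (b : Fin 3) (hb : b ∈ List.replicate k2 c2) : a ≤ b := by
  rw [List.eq_of_mem_replicate ha, List.eq_of_mem_replicate hb]
  exact h

lemma sorted_rep (k1 k2 k3 : ℕ) : List.Pairwise (· ≤ ·)
    (List.replicate k1 (0 : Fin 3) ++ List.replicate k2 1 ++ List.replicate k3 2) := by
  rw [List.pairwise_append]
  refine ⟨?_, ?_, ?_⟩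
  · rw [List.pairwise_append]
    exact ⟨List.pairwise_replicate.mpr (Or.inr le_rfl),
      List.pairwise_replicate.mpr (Or.inr le_rfl), pairwise_cross (by decide)⟩
  · exact List.pairwise_replicate.mpr (Or.inr le_rfl)
  · intro a ha b hb
    rcases List.mem_append.mp ha with h1 | h1
    · exact pairwise_cross (by decide) a h1 b hb
    · exact pairwise_cross (by decide) a h1 b hb

lemma no_inv {l A B : List (Fin 3)} (h : List.Pairwise (· ≤ ·) l) (hl : l = A ++ B)
    {p q : Fin 3} (hp : p ∈ A) (hq : q ∈ B) : p ≤ q := by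
  subst hl
  exact (List.pairwise_append.mp h).2.2 p hp q hq

theorem Labc_not_CF : ¬ Labc.IsContextFree := by
  rintro ⟨g, hg⟩
  classical
  set N := bnd g ^ ((NTS g).card + 1) + 1 with hN
  have hzmem : (List.replicate N 0 ++ List.replicate N 1 ++ List.replicate (2 * N) 2 :
      List (Fin 3)) ∈ g.language := by
    rw [hg]
    exact ⟨N, rfl⟩
  have hlen : bnd g ^ ((NTS g).card + 1) <
      (List.replicate N 0 ++ List.replicate N 1 ++ List.replicate (2 * N) 2 :
        List (Fin 3)).length := by
    simp only [List.length_append, List.length_replicate]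
    omega
  obtain ⟨x, u, y, v, zz, hdec, hne, hpump⟩ := pump hzmem hlen
  rw [hg] at hpump
  obtain ⟨N2, hN2⟩ := hpump
  -- counts
  have c0z := congrArg (List.count (0 : Fin 3)) hdec
  have c1z := congrArg (List.count (1 : Fin 3)) hdec
  have c2z := congrArg (List.count (2 : Fin 3)) hdec
  have c0w := congrArg (List.count (0 : Fin 3)) hN2
  have c1w := congrArg (List.count (1 : Fin 3)) hN2
  have c2w := congrArg (List.count (2 : Fin 3)) hN2
  simp only [List.count_append, cnt_rep,
    show ((0:Fin 3) = 0) = True from by simp, show ((0:Fin 3) = 1) = False from by decide,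
    show ((0:Fin 3) = 2) = False from by decide, show ((1:Fin 3) = 0) = False from by decide,
    show ((1:Fin 3) = 1) = True from by simp, show ((1:Fin 3) = 2) = False from by decide,
    show ((2:Fin 3) = 0) = False from by decide, show ((2:Fin 3) = 1) = False from by decide,
    show ((2:Fin 3) = 2) = True from by simp, if_true, if_false]
    at c0z c1z c2z c0w c1w c2w
  -- lengths
  have lz := congrArg List.length hdec
  have lw := congrArg List.length hN2
  simp only [List.length_append, List.length_replicate] at lz lw
  have hune : 0 < u.length + v.length := by
    rcases hne with h | h
    · have := List.length_pos_iff.mpr h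
      omega
    · have := List.length_pos_iff.mpr h
      omega
  have hNlt : N < N2 := by omega
  -- each letter occurs in u ++ v
  have hm0 : (0 : Fin 3) ∈ u ++ v := by
    refine List.count_pos_iff.mp ?_
    rw [List.count_append]
    omega
  have hm1 : (1 : Fin 3) ∈ u ++ v := by
    refine List.count_pos_iff.mp ?_
    rw [List.count_append]
    omega
  have hm2 : (2 : Fin 3) ∈ u ++ v := by
    refine List.count_pos_iff.mp ?_
    rw [List.count_append]
    omega
  -- sortedness of the pumped word
  have hsort : List.Pairwise (· ≤ ·)
      (x ++ (u ++ (u ++ (y ++ (v ++ (v ++ zz)))))) := by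
    rw [hN2]
    exact sorted_rep N2 N2 (2 * N2)
  have contra_u : ∀ p q : Fin 3, p ∈ u → q ∈ u → p < q → False := by
    intro p q hp hq hpq
    have hle : q ≤ p := no_inv hsort
      (show _ = (x ++ u) ++ (u ++ (y ++ (v ++ (v ++ zz)))) by simp [List.append_assoc])
      (List.mem_append.mpr (Or.inr hq)) (List.mem_append.mpr (Or.inl hp))
    exact absurd (lt_of_lt_of_le hpq hle) (lt_irrefl p)
  have contra_v : ∀ p q : Fin 3, p ∈ v → q ∈ v → p < q → False := by
    intro p q hp hq hpq
    have hle : q ≤ p := no_inv hsort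
      (show _ = (x ++ (u ++ (u ++ (y ++ v)))) ++ (v ++ zz) by simp [List.append_assoc])
      (by
        refine List.mem_append.mpr (Or.inr ?_)
        refine List.mem_append.mpr (Or.inr ?_)
        refine List.mem_append.mpr (Or.inr ?_)
        exact List.mem_append.mpr (Or.inr hq))
      (List.mem_append.mpr (Or.inl hp))
    exact absurd (lt_of_lt_of_le hpq hle) (lt_irrefl p)
  rcases List.mem_append.mp hm0 with h0 | h0 <;>
    rcases List.mem_append.mp hm1 with h1 | h1 <;>
      rcases List.mem_append.mp hm2 with h2 | h2
  · exact contra_u 0 1 h0 h1 (by decide)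
  · exact contra_u 0 1 h0 h1 (by decide)
  · exact contra_u 0 2 h0 h2 (by decide)
  · exact contra_v 1 2 h1 h2 (by decide)
  · exact contra_u 1 2 h1 h2 (by decide)
  · exact contra_v 0 2 h0 h2 (by decide)
  · exact contra_v 0 1 h0 h1 (by decide)
  · exact contra_v 0 1 h0 h1 (by decide)

end NotCF

/-- The non-context-free language `L_abc` belongs to `4SDA`;
consequently `4SDA ⊄ CFL`. -/
theorem Labc_mem_fourSDA :
    Labc ∈ kSDA 4 (Fin 3) ∧ ¬ Labc.IsContextFree ∧
      ¬ kSDA 4 (Fin 3) ⊆ {L : Language (Fin 3) | L.IsContextFree} := by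
  exact ⟨LabcSDA.Labc_in_4SDA, Labc_not_CF,
    fun h => Labc_not_CF (h LabcSDA.Labc_in_4SDA)⟩
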